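/- arXiv:1708.00639 — 12 statements merged into one kernel-verified Lean document; each statement's English description precedes it below -/
import Mathlib

section
/- If both aw and wb are periodic (i.e., aw has period at most |aw|/2 and wb has period at most |wb|/2), then the smallest period of aw equals the smallest period of wb. -/
/-- `p` is a period of `w`: `p ≥ 1` and `w[i] = w[i+p]` for all valid indices. -/
def IsPeriod {α : Type*} (w : List α) (p : ℕ) : Prop :=
  1 ≤ p ∧ ∀ i, i + p < w.length → w[i]? = w[i + p]?

/-- The smallest period of `w`. -/
noncomputable def minPeriod {α : Type*} (w : List α) : ℕ :=
  sInf {p | IsPeriod w p}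

/-- `w` is periodic if its smallest period is at most `|w|/2`. -/
def Periodic {α : Type*} (w : List α) : Prop :=
  2 * minPeriod w ≤ w.length

/-- `w` is aperiodic if its smallest period exceeds `|w|/2`. -/
def Aperiodic {α : Type*} (w : List α) : Prop :=
  w.length < 2 * minPeriod w

/-- Cyclic rotation of `w` by `i`. -/
def rot {α : Type*} (w : List α) (i : ℕ) : List α :=
  w.drop i ++ w.take i

/-- A square is a nonempty word of the form `u ++ u`. -/
def IsSq {α : Type*} (s : List α) : Prop :=
  ∃ u : List α, u ≠ [] ∧ s = u ++ u

/-- `p`-fold concatenation of the word `y`. -/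
def listPow {α : Type*} (y : List α) (p : ℕ) : List α :=
  (List.replicate p y).flatten

/-- A word is primitive if it is not a `p`-th power with `p ≥ 2`. -/
def Primitive {α : Type*} (w : List α) : Prop :=
  ¬ ∃ (y : List α) (p : ℕ), 2 ≤ p ∧ w = listPow y p

/-- The set of distinct squares occurring in the circular word `(w)`. -/
def cyclicSquares {α : Type*} (w : List α) : Set (List α) :=
  {s | IsSq s ∧ ∃ i < w.length, s <:+: rot w i}

/-- `s` occurs in `x` starting at (0-indexed) position `i`. -/
def occursAt {α : Type*} (s x : List α) (i : ℕ) : Prop :=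
  (x.drop i).take s.length = s

/-- The rightmost occurrence of `s` in `x` starts at (0-indexed) position `i`. -/
def rightmostStartsAt {α : Type*} (s x : List α) (i : ℕ) : Prop :=
  occursAt s x i ∧ ∀ j, occursAt s x j → j ≤ i

/-- `w[i..j]` with 1-indexed inclusive bounds. -/
def oneSlice {α : Type*} (w : List α) (i j : ℕ) : List α :=
  (w.drop (i - 1)).take (j - i + 1)

/-- The letters `a` and `b` of the two-letter alphabet. -/
def la : Bool := false
def lb : Bool := true

/-- The word `(ba)^m`. -/
def baPow (m : ℕ) : List Bool := (List.replicate m [lb, la]).flatten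

/-- The word `(ab)^m`. -/
def abPow (m : ℕ) : List Bool := (List.replicate m [la, lb]).flatten

/-- `x_k = a (ba)^{k+1} a (ba)^{k+2}`. -/
def xWord (k : ℕ) : List Bool := [la] ++ baPow (k + 1) ++ [la] ++ baPow (k + 2)

/-- `f_k = a(ba)^{k+1} a(ba)^{k+2} a(ba)^{k+1} a(ba)^{k+2}`. -/
def fWord (k : ℕ) : List Bool := xWord k ++ xWord k


section Aux
variable {α : Type*}

lemma isPeriod_length_or_more {w : List α} {p : ℕ} (hp : w.length ≤ p) (h1 : 1 ≤ p) :
    IsPeriod w p :=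
  ⟨h1, fun i hi => absurd hi (by omega)⟩

lemma periods_nonempty (w : List α) : {p | IsPeriod w p}.Nonempty :=
  ⟨w.length + 1, isPeriod_length_or_more (by omega) (by omega)⟩

lemma minPeriod_isPeriod (w : List α) : IsPeriod w (minPeriod w) :=
  Nat.sInf_mem (periods_nonempty w)

lemma minPeriod_le {w : List α} {p : ℕ} (hp : IsPeriod w p) : minPeriod w ≤ p :=
  Nat.sInf_le hp

lemma period_mul {w : List α} {g : ℕ} (hg : IsPeriod w g) :
    ∀ m i, i + m * g < w.length → w[i]? = w[i + m * g]? := by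
  intro m
  induction m with
  | zero => intro i _; simp
  | succ m ih =>
    intro i hi
    have hmg : (m + 1) * g = m * g + g := Nat.succ_mul m g
    have h1 : w[i]? = w[i + g]? := hg.2 i (by omega)
    have h2 : w[i + g]? = w[i + g + m * g]? := ih (i + g) (by omega)
    rw [h1, h2]; congr 1; omega

lemma period_sub {w : List α} {p q : ℕ} (hp : IsPeriod w p) (hq : IsPeriod w q)
    (hpq : p < q) (hlen : p + q ≤ w.length) : IsPeriod w (q - p) := by
  refine ⟨by omega, fun i hi => ?_⟩
  rcases lt_or_ge i p with h | h
  · have h1 : w[i]? = w[i + q]? := hq.2 i (by omega)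
    have h2 : w[i + (q - p)]? = w[i + (q - p) + p]? := hp.2 _ (by omega)
    rw [h1, h2]; congr 1; omega
  · have h1 : w[i - p]? = w[i - p + p]? := hp.2 _ (by omega)
    have h2 : w[i - p]? = w[i - p + q]? := hq.2 _ (by omega)
    rw [show i - p + p = i by omega] at h1
    rw [show i - p + q = i + (q - p) by omega] at h2
    rw [← h1, h2]

lemma fineWilf : ∀ n {w : List α} {p q : ℕ}, p + q ≤ n → IsPeriod w p → IsPeriod w q →
    p + q ≤ w.length → IsPeriod w (Nat.gcd p q) := by
  intro n
  induction n using Nat.strong_induction_on with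
  | _ n ih =>
    intro w p q hn hp hq hlen
    rcases lt_trichotomy p q with h | h | h
    · have hsub := period_sub hp hq h hlen
      have := ih (p + (q - p)) (by have := hp.1; omega) (le_refl _) hp hsub (by omega)
      rwa [Nat.gcd_sub_self_right (le_of_lt h)] at this
    · subst h; simpa using hp
    · have hsub := period_sub hq hp h (by omega)
      have := ih (q + (p - q)) (by have := hq.1; omega) (le_refl _) hq hsub (by omega)
      rw [Nat.gcd_sub_self_right (le_of_lt h)] at this
      rwa [Nat.gcd_comm]

lemma inner_period_cons {w : List α} {a : α} {p : ℕ} (hp : IsPeriod (a :: w) p) :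
    IsPeriod w p := by
  refine ⟨hp.1, fun i hi => ?_⟩
  have := hp.2 (i + 1) (by simp only [List.length_cons]; omega)
  rw [show i + 1 + p = (i + p) + 1 by omega] at this
  simpa using this

lemma inner_period_append {w : List α} {b : α} {p : ℕ} (hp : IsPeriod (w ++ [b]) p) :
    IsPeriod w p := by
  refine ⟨hp.1, fun i hi => ?_⟩
  have hlen : (w ++ [b]).length = w.length + 1 := by simp
  have h := hp.2 i (by omega)
  rwa [List.getElem?_append_left (by omega), List.getElem?_append_left (by omega)] at h

lemma cons_period_of_inner {w : List α} {a : α} {p g m : ℕ}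
    (hp : IsPeriod (a :: w) p) (hg : IsPeriod w g) (hm : p = m * g)
    (hple : p ≤ w.length) : IsPeriod (a :: w) g := by
  have hg1 := hg.1
  have hp1 := hp.1
  have hm1 : 1 ≤ m := by nlinarith
  obtain ⟨k, rfl⟩ : ∃ k, m = k + 1 := ⟨m - 1, by omega⟩
  have hkg : (k + 1) * g = k * g + g := Nat.succ_mul k g
  refine ⟨hg1, fun i hi => ?_⟩
  simp only [List.length_cons] at hi
  match i with
  | 0 =>
    have h1 := hp.2 0 (by simp only [List.length_cons]; omega)
    rw [show (0 : ℕ) + p = p by omega] at h1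
    have h2 : w[g - 1]? = w[g - 1 + k * g]? := period_mul hg k (g - 1) (by omega)
    rw [show g - 1 + k * g = p - 1 by omega] at h2
    have h3 : (a :: w)[p]? = w[p - 1]? := by
      rw [show p = (p - 1) + 1 by omega]; simp
    have h4 : (a :: w)[0 + g]? = w[g - 1]? := by
      rw [show (0 : ℕ) + g = (g - 1) + 1 by omega]; simp
    rw [h4, h1, h3, ← h2]
  | Nat.succ j =>
    have h := hg.2 j (by omega)
    have e1 : (a :: w)[j + 1]? = w[j]? := by simp
    have e2 : (a :: w)[j + 1 + g]? = w[j + g]? := by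
      rw [show j + 1 + g = (j + g) + 1 by omega]; simp
    rw [e1, e2, h]

lemma append_period_of_inner {w : List α} {b : α} {q g m : ℕ}
    (hq : IsPeriod (w ++ [b]) q) (hg : IsPeriod w g) (hm : q = m * g)
    (hqle : q ≤ w.length) : IsPeriod (w ++ [b]) g := by
  have hg1 := hg.1
  have hq1 := hq.1
  have hm1 : 1 ≤ m := by nlinarith
  obtain ⟨k, rfl⟩ : ∃ k, m = k + 1 := ⟨m - 1, by omega⟩
  have hkg : (k + 1) * g = k * g + g := Nat.succ_mul k g
  have hlen : (w ++ [b]).length = w.length + 1 := by simp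
  set n := w.length with hn
  refine ⟨hg1, fun i hi => ?_⟩
  rw [hlen] at hi
  rcases lt_or_ge (i + g) n with h | h
  · have h0 := hg.2 i (by omega)
    rwa [List.getElem?_append_left (by omega), List.getElem?_append_left (by omega)]
  · have hig : i + g = n := by omega
    have h1 : (w ++ [b])[n - q]? = (w ++ [b])[n]? := by
      have := hq.2 (n - q) (by omega)
      rwa [show n - q + q = n by omega] at this
    have h2 : w[n - q]? = w[n - q + k * g]? := period_mul hg k (n - q) (by omega)
    rw [show n - q + k * g = n - g by omega] at h2
    have h3 : (w ++ [b])[n - q]? = w[n - q]? := List.getElem?_append_left (by omega)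
    have h4 : (w ++ [b])[i]? = w[n - g]? := by
      rw [show i = n - g by omega]; exact List.getElem?_append_left (by omega)
    rw [hig, h4, ← h2, ← h3, h1]

end Aux

/-- If both `aw` and `wb` are periodic, then their smallest periods are equal. -/
theorem stmt0 {α : Type*} (w : List α) (a b : α)
    (h1 : Periodic (a :: w)) (h2 : Periodic (w ++ [b])) :
    minPeriod (a :: w) = minPeriod (w ++ [b]) := by
  set n := w.length with hn
  have hlc : (a :: w).length = n + 1 := by simp [hn]
  have hla : (w ++ [b]).length = n + 1 := by simp [hn]
  set p := minPeriod (a :: w) with hpdef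
  set q := minPeriod (w ++ [b]) with hqdef
  have hp : IsPeriod (a :: w) p := minPeriod_isPeriod _
  have hq : IsPeriod (w ++ [b]) q := minPeriod_isPeriod _
  have hp1 := hp.1
  have hq1 := hq.1
  unfold Periodic at h1 h2
  rw [hlc, ← hpdef] at h1
  rw [hla, ← hqdef] at h2
  have hpw : IsPeriod w p := inner_period_cons hp
  have hqw : IsPeriod w q := inner_period_append hq
  by_contra hne
  rcases lt_or_gt_of_ne hne with h | h
  · -- p < q : gcd is a period of w ++ [b], contradicting minimality of q
    have hlen : p + q ≤ n := by omega
    have hgcd : IsPeriod w (Nat.gcd p q) := fineWilf (p + q) (le_refl _) hpw hqw hlen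
    obtain ⟨m, hm⟩ : Nat.gcd p q ∣ q := Nat.gcd_dvd_right p q
    have : IsPeriod (w ++ [b]) (Nat.gcd p q) :=
      append_period_of_inner hq hgcd (hm.trans (Nat.mul_comm _ _)) (by omega)
    have hle : q ≤ Nat.gcd p q := minPeriod_le this
    have : Nat.gcd p q ≤ p := Nat.le_of_dvd (by omega) (Nat.gcd_dvd_left p q)
    omega
  · -- q < p : gcd is a period of a :: w, contradicting minimality of p
    have hlen : p + q ≤ n := by omega
    have hgcd : IsPeriod w (Nat.gcd p q) := fineWilf (p + q) (le_refl _) hpw hqw hlen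
    obtain ⟨m, hm⟩ : Nat.gcd p q ∣ p := Nat.gcd_dvd_left p q
    have : IsPeriod (a :: w) (Nat.gcd p q) :=
      cons_period_of_inner hp hgcd (hm.trans (Nat.mul_comm _ _)) (by omega)
    have hle : p ≤ Nat.gcd p q := minPeriod_le this
    have : Nat.gcd p q ≤ q := Nat.le_of_dvd (by omega) (Nat.gcd_dvd_right p q)
    omega
end

section
/- If p and q are periods of a word w and p + q ≤ |w| + gcd(p, q), then gcd(p, q) is also a period of w. -/
private lemma fw_aux : ∀ (N : ℕ) {α : Type*} (w : List α) (p q : ℕ), p + q ≤ N →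
    IsPeriod w p → IsPeriod w q → p + q ≤ w.length + Nat.gcd p q →
    IsPeriod w (Nat.gcd p q) := by
  intro N
  induction N with
  | zero => intro α w p q hN hp _ _; exact absurd hN (by have := hp.1; omega)
  | succ N ih =>
    intro α w p q hN hp hq hlen
    -- reduce to the ordered case p ≤ q
    suffices H : ∀ (w : List α) (p q : ℕ), p ≤ q → p + q ≤ N + 1 →
        IsPeriod w p → IsPeriod w q → p + q ≤ w.length + Nat.gcd p q →
        IsPeriod w (Nat.gcd p q) by
      rcases le_total p q with h | h
      · exact H w p q h hN hp hq hlen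
      · rw [Nat.gcd_comm]
        exact H w q p h (by omega) hq hp (by rw [Nat.gcd_comm]; omega)
    clear hN hp hq hlen p q
    intro w p q hpq hN hp hq hlen
    rcases eq_or_lt_of_le hpq with rfl | hlt
    · rwa [Nat.gcd_self]
    set n := w.length with hn
    set d := Nat.gcd p q with hdd
    have hp1 : 1 ≤ p := hp.1
    have hdp : d ∣ p := Nat.gcd_dvd_left p q
    have hdq : d ∣ q := Nat.gcd_dvd_right p q
    have hd1 : 1 ≤ d := Nat.gcd_pos_of_pos_left q hp1
    have hdle : d ≤ p := Nat.le_of_dvd hp1 hdp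
    have hdvd_sub : d ∣ (q - p) := Nat.dvd_sub hdq hdp
    have hdqp : d ≤ q - p := Nat.le_of_dvd (by omega) hdvd_sub
    have hn2p : 2 * p ≤ n := by omega
    -- the prefix u of length n - p
    set u := w.take (n - p) with hu
    have hulen : u.length = n - p := by
      rw [hu, List.length_take]; omega
    have hu_get : ∀ j, j < n - p → u[j]? = w[j]? := by
      intro j hj; rw [hu, List.getElem?_take_of_lt hj]
    have hu_p : IsPeriod u p := by
      refine ⟨hp1, fun i hi => ?_⟩
      rw [hulen] at hi
      rw [hu_get i (by omega), hu_get (i + p) (by omega)]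
      exact hp.2 i (by omega)
    have hu_qp : IsPeriod u (q - p) := by
      refine ⟨by omega, fun i hi => ?_⟩
      rw [hulen] at hi
      rw [hu_get i (by omega), hu_get (i + (q - p)) (by omega)]
      have h1 : w[i]? = w[i + q]? := hq.2 i (by omega)
      have h2 : w[i + (q - p)]? = w[i + (q - p) + p]? := hp.2 _ (by omega)
      rw [h1, h2]
      congr 1
      omega
    have hud : IsPeriod u d := by
      have := ih u p (q - p) (by omega) hu_p hu_qp
        (by rw [hulen, Nat.gcd_sub_self_right hpq, ← hdd]; omega)
      rwa [Nat.gcd_sub_self_right hpq, ← hdd] at this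
    -- every position reduces mod d
    have hmod : ∀ x, x < n → w[x]? = w[x % d]? := by
      intro x
      induction x using Nat.strong_induction_on with
      | _ x ihx =>
        intro hx
        rcases lt_or_ge x d with hxd | hxd
        · rw [Nat.mod_eq_of_lt hxd]
        rcases lt_or_ge x (n - p) with hxnp | hxnp
        · -- use period d of u to step down by d
          have h1 : u[x - d]? = u[x - d + d]? := hud.2 (x - d) (by rw [hulen]; omega)
          have h2 : w[x]? = w[x - d]? := by
            rw [← hu_get x hxnp, ← hu_get (x - d) (by omega)]
            rw [h1]; congr 1; omega
          rw [h2, ihx (x - d) (by omega) (by omega), Nat.mod_eq_sub_mod hxd]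
        · -- step down by p
          have hxp : p ≤ x := by omega
          have h1 : w[x - p]? = w[x - p + p]? := hp.2 (x - p) (by omega)
          have h2 : w[x]? = w[x - p]? := by rw [h1]; congr 1; omega
          rw [h2, ihx (x - p) (by omega) (by omega)]
          obtain ⟨k, hk⟩ := hdp
          congr 1
          rw [hk, Nat.sub_mul_mod (by omega)]
    refine ⟨hd1, fun i hi => ?_⟩
    rw [hmod i (by omega), hmod (i + d) hi, Nat.add_mod_right]

/-- Fine–Wilf periodicity lemma. -/
theorem stmt1 {α : Type*} (w : List α) (p q : ℕ)
    (hp : IsPeriod w p) (hq : IsPeriod w q)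
    (h : p + q ≤ w.length + Nat.gcd p q) :
    IsPeriod w (Nat.gcd p q) := by
  exact fw_aux (p + q) w p q le_rfl hp hq h
end

section
/- For every k ≥ 0, the word x_k = a(ba)^{k+1} a(ba)^{k+2} over the alphabet {a, b} is primitive, i.e., x_k cannot be written as y^p for any word y and integer p ≥ 2. -/
lemma count_baPow (c : Bool) (m : ℕ) : (baPow m).count c = m * ([lb, la].count c) := by
  induction m with
  | zero => simp [baPow]
  | succ n ih =>
    simp only [baPow, List.replicate_succ, List.flatten_cons, List.count_append] at *
    rw [ih]; ring

lemma count_listPow (c : Bool) (y : List Bool) (p : ℕ) :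
    (listPow y p).count c = p * y.count c := by
  induction p with
  | zero => simp [listPow]
  | succ n ih =>
    simp only [listPow, List.replicate_succ, List.flatten_cons, List.count_append] at *
    rw [ih]; ring

lemma count_la_x (k : ℕ) : (xWord k).count la = 2 * k + 5 := by
  simp [xWord, List.count_append, count_baPow, la, lb]; ring

lemma count_lb_x (k : ℕ) : (xWord k).count lb = 2 * k + 3 := by
  simp [xWord, List.count_append, count_baPow, la, lb]; ring

/-- `x_k = a(ba)^{k+1} a(ba)^{k+2}` is primitive for every `k ≥ 0`. -/
theorem stmt2 (k : ℕ) : Primitive (xWord k) := by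
  rintro ⟨y, p, hp, hx⟩
  have ha : 2 * k + 5 = p * y.count la := by
    rw [← count_la_x k, hx, count_listPow]
  have hb : 2 * k + 3 = p * y.count lb := by
    rw [← count_lb_x k, hx, count_listPow]
  have hda : p ∣ 2 * k + 5 := ⟨_, ha⟩
  have hdb : p ∣ 2 * k + 3 := ⟨_, hb⟩
  have h2 : p ∣ 2 := by
    have := Nat.dvd_sub hda hdb
    simpa using this
  have hle : p ≤ 2 := Nat.le_of_dvd (by norm_num) h2
  have hp2 : p = 2 := by omega
  subst hp2
  omega
end

section
/- If two cyclic rotations of a word w are equal, say w^{(i)} = w^{(j)} with 0 ≤ i < j < |w|, then gcd(|w|, j - i) is a period of w. -/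
/-- If two cyclic rotations of `w` coincide, `gcd(|w|, j - i)` is a period of `w`. -/
theorem stmt4 {α : Type*} (w : List α) (i j : ℕ)
    (hij : i < j) (hj : j < w.length) (h : rot w i = rot w j) :
    IsPeriod w (Nat.gcd w.length (j - i)) := by
  set n := w.length with hn
  set d := j - i with hd
  have hd0 : 0 < d := Nat.sub_pos_of_lt hij
  have hdn : d < n := lt_of_le_of_lt (Nat.sub_le _ _) hj
  have hrot : ∀ k, rot w k = w.rotate k ∨ True := fun _ => Or.inr trivial
  have hri : rot w i = w.rotate i := by
    rw [List.rotate_eq_drop_append_take (le_of_lt (lt_trans hij hj))]; rfl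
  have hrj : rot w j = w.rotate j := by
    rw [List.rotate_eq_drop_append_take (le_of_lt hj)]; rfl
  have h' : w.rotate i = w.rotate j := by rw [← hri, ← hrj, h]
  -- w.rotate d = w
  have hfix : w.rotate d = w := by
    have := congrArg (fun l => List.rotate l (n - i)) h'
    simp only [List.rotate_rotate] at this
    have e1 : i + (n - i) = n := Nat.add_sub_cancel' (le_of_lt (lt_trans hij hj))
    have e2 : j + (n - i) = n + d := by omega
    rw [e1, e2] at this
    rw [show w.rotate (n + d) = (w.rotate w.length).rotate d by rw [← List.rotate_rotate, hn],
      List.rotate_length] at this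
    exact this.symm
  have hfixmul : ∀ m, w.rotate (d * m) = w := by
    intro m; induction m with
    | zero => simp
    | succ m ih => rw [Nat.mul_succ, ← List.rotate_rotate, ih, hfix]
  set g := Nat.gcd n d with hg
  have hgd : Nat.gcd d n < n := lt_of_le_of_lt (Nat.gcd_le_left n hd0) hdn
  obtain ⟨m, _, hm⟩ := Nat.exists_mul_mod_eq_gcd hgd
  have hgfix : w.rotate g = w := by
    have : w.rotate (d * m % n) = w := by rw [hn, List.rotate_mod]; exact hfixmul m
    rwa [hm, Nat.gcd_comm] at this
  have hg1 : 1 ≤ g := Nat.gcd_pos_of_pos_right _ hd0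
  refine ⟨hg1, fun k hk => ?_⟩
  have hkn : k < w.length := by omega
  conv_lhs => rw [← hgfix]
  rw [List.getElem?_rotate hkn, Nat.mod_eq_of_lt (by omega)]
end

section
/- For every k ≥ 0, the number of distinct square words occurring as factors of the word a(ba)^{k+2} over {a,b} is exactly 2·⌊(k+2)/2⌋; namely, the squares are exactly (ab)^i(ab)^i and (ba)^i(ba)^i for 1 ≤ i ≤ ⌊(k+2)/2⌋. -/
namespace Stmt5Aux

def fQ (i : ℕ) : Bool := decide (i % 2 = 1)

lemma mapf_congr (t t' L : ℕ) (h : t % 2 = t' % 2) :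
    (List.range' t L).map fQ = (List.range' t' L).map fQ := by
  simp only [List.range'_eq_map_range, List.map_map]
  apply List.map_congr_left
  intro i _
  simp only [Function.comp, fQ, decide_eq_decide]
  omega

lemma mapf_split (t L1 L2 : ℕ) :
    (List.range' t (L1 + L2)).map fQ =
      (List.range' t L1).map fQ ++ (List.range' (t + L1) L2).map fQ := by
  rw [← List.map_append, List.range'_append_1, Nat.add_comm L1 L2]

lemma abPow_eq (i : ℕ) : abPow i = (List.range' 0 (2 * i)).map fQ := by
  induction i with
  | zero => simp [abPow]
  | succ n ih =>
    have h1 : abPow (n + 1) = abPow n ++ [la, lb] := by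
      simp [abPow, List.replicate_succ']
    have h2 : 2 * (n + 1) = 2 * n + 1 + 1 := by ring
    rw [h1, ih, h2, List.range'_concat, List.range'_concat]
    simp [fQ, la, lb, Nat.mul_mod_right, Nat.add_mod]

lemma baPow_eq (i : ℕ) : baPow i = (List.range' 1 (2 * i)).map fQ := by
  induction i with
  | zero => simp [baPow]
  | succ n ih =>
    have h1 : baPow (n + 1) = baPow n ++ [lb, la] := by
      simp [baPow, List.replicate_succ']
    have h2 : 2 * (n + 1) = 2 * n + 1 + 1 := by ring
    rw [h1, ih, h2, List.range'_concat, List.range'_concat]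
    simp [fQ, lb, la, Nat.add_mod]

lemma word_eq (m : ℕ) : [la] ++ baPow m = (List.range' 0 (2 * m + 1)).map fQ := by
  rw [baPow_eq, List.range'_succ]
  simp [fQ, la]

lemma absq (i : ℕ) : abPow i ++ abPow i = (List.range' 0 (4 * i)).map fQ := by
  have h4 : 4 * i = 2 * i + 2 * i := by ring
  rw [h4, mapf_split, ← abPow_eq, mapf_congr (0 + 2*i) 0 (2*i) (by omega), ← abPow_eq]

lemma basq (i : ℕ) : baPow i ++ baPow i = (List.range' 1 (4 * i)).map fQ := by
  have h4 : 4 * i = 2 * i + 2 * i := by ring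
  rw [h4, mapf_split, ← baPow_eq, mapf_congr (1 + 2*i) 1 (2*i) (by omega), ← baPow_eq]

lemma infix_iff (s : List Bool) (n : ℕ) :
    s <:+: (List.range' 0 n).map fQ ↔
      ∃ t, t + s.length ≤ n ∧ s = (List.range' t s.length).map fQ := by
  constructor
  · rintro ⟨p, q, hpq⟩
    have hn : n = p.length + (s.length + q.length) := by
      have := congrArg List.length hpq
      simp at this; omega
    refine ⟨p.length, by omega, ?_⟩
    rw [hn, mapf_split, mapf_split] at hpq
    rw [List.append_assoc] at hpq
    have h1 := List.append_inj hpq (by simp)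
    have h2 := List.append_inj h1.2 (by simp)
    simpa using h2.1
  · rintro ⟨t, ht, hs⟩
    refine ⟨(List.range' 0 t).map fQ, (List.range' (t + s.length) (n - t - s.length)).map fQ, ?_⟩
    have hn : n = t + (s.length + (n - t - s.length)) := by omega
    conv_rhs => rw [hn, mapf_split, mapf_split]
    simp only [Nat.zero_add]
    rw [← hs, List.append_assoc]

end Stmt5Aux

namespace Stmt5Aux

lemma length_abPow (i : ℕ) : (abPow i).length = 2 * i := by rw [abPow_eq]; simp
lemma length_baPow (i : ℕ) : (baPow i).length = 2 * i := by rw [baPow_eq]; simp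

lemma head_absq (i : ℕ) (h : 1 ≤ i) : (abPow i ++ abPow i).head? = some la := by
  obtain ⟨j, rfl⟩ : ∃ j, i = j + 1 := ⟨i - 1, by omega⟩
  simp [abPow, List.replicate_succ]

lemma head_basq (i : ℕ) (h : 1 ≤ i) : (baPow i ++ baPow i).head? = some lb := by
  obtain ⟨j, rfl⟩ : ∃ j, i = j + 1 := ⟨i - 1, by omega⟩
  simp [baPow, List.replicate_succ]

lemma sq_infix (m : ℕ) (s : List Bool) (h : IsSq s) (hi : s <:+: [la] ++ baPow m) :
    ∃ i, 1 ≤ i ∧ 2 * i ≤ m ∧ (s = abPow i ++ abPow i ∨ s = baPow i ++ baPow i) := by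
  obtain ⟨u, hu, rfl⟩ := h
  rw [word_eq, infix_iff] at hi
  obtain ⟨t, ht, hs⟩ := hi
  set ℓ := u.length with hℓ
  have hlen : (u ++ u).length = ℓ + ℓ := by simp [hℓ]
  rw [hlen] at ht hs
  have hs2 := hs
  rw [mapf_split] at hs2
  have h1 := List.append_inj hs2 (by simp [hℓ])
  have hpos : 1 ≤ ℓ := by
    have := List.length_pos_iff.mpr hu
    omega
  obtain ⟨j, hj⟩ : ∃ j, ℓ = j + 1 := ⟨ℓ - 1, by omega⟩
  have e1 := congrArg List.head? h1.1
  have e2 := congrArg List.head? h1.2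
  simp only [hj, List.range'_succ] at e1 e2
  simp at e1 e2
  have hh : fQ t = fQ (t + ℓ) := by
    rw [hj]
    exact Option.some.inj (e1.symm.trans e2)
  have hev : ℓ % 2 = 0 := by
    simp only [fQ, decide_eq_decide] at hh
    omega
  obtain ⟨i, hi2⟩ : ∃ i, ℓ = 2 * i := ⟨ℓ / 2, by omega⟩
  refine ⟨i, by omega, by omega, ?_⟩
  rcases Nat.mod_two_eq_zero_or_one t with h0 | h0
  · left
    have h4 : ℓ + ℓ = 4 * i := by omega
    rw [absq, hs, h4, mapf_congr t 0 _ (by omega)]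
  · right
    have h4 : ℓ + ℓ = 4 * i := by omega
    rw [basq, hs, h4, mapf_congr t 1 _ (by omega)]

end Stmt5Aux

open Stmt5Aux

/-- The distinct squares occurring in `a(ba)^{k+2}` are exactly
`(ab)^i(ab)^i` and `(ba)^i(ba)^i` for `1 ≤ i ≤ ⌊(k+2)/2⌋`,
and there are exactly `2⌊(k+2)/2⌋` of them. -/
theorem stmt5 (k : ℕ) :
    {s | IsSq s ∧ s <:+: ([la] ++ baPow (k + 2))} =
      {s | ∃ i, 1 ≤ i ∧ i ≤ (k + 2) / 2 ∧
        (s = abPow i ++ abPow i ∨ s = baPow i ++ baPow i)} ∧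
    {s | IsSq s ∧ s <:+: ([la] ++ baPow (k + 2))}.ncard = 2 * ((k + 2) / 2) := by
  have hmain : {s | IsSq s ∧ s <:+: ([la] ++ baPow (k + 2))} =
      {s | ∃ i, 1 ≤ i ∧ i ≤ (k + 2) / 2 ∧
        (s = abPow i ++ abPow i ∨ s = baPow i ++ baPow i)} := by
    ext s
    simp only [Set.mem_setOf_eq]
    constructor
    · rintro ⟨hsq, hinf⟩
      obtain ⟨i, h1, h2, h3⟩ := sq_infix (k + 2) s hsq hinf
      exact ⟨i, h1, by omega, h3⟩
    · rintro ⟨i, h1, h2, h3⟩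
      constructor
      · rcases h3 with rfl | rfl
        · refine ⟨abPow i, ?_, rfl⟩
          intro h
          have := length_abPow i
          rw [h] at this; simp at this; omega
        · refine ⟨baPow i, ?_, rfl⟩
          intro h
          have := length_baPow i
          rw [h] at this; simp at this; omega
      · rw [word_eq, infix_iff]
        rcases h3 with rfl | rfl
        · refine ⟨0, ?_, ?_⟩
          · simp only [List.length_append, length_abPow]; omega
          · have hl : (abPow i ++ abPow i).length = 4 * i := by
              simp only [List.length_append, length_abPow]; ring
            rw [hl]; exact absq i
        · refine ⟨1, ?_, ?_⟩
          · simp only [List.length_append, length_baPow]; omega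
          · have hl : (baPow i ++ baPow i).length = 4 * i := by
              simp only [List.length_append, length_baPow]; ring
            rw [hl]; exact basq i
  refine ⟨hmain, ?_⟩
  rw [hmain]
  have hfin : {s | ∃ i, 1 ≤ i ∧ i ≤ (k + 2) / 2 ∧
        (s = abPow i ++ abPow i ∨ s = baPow i ++ baPow i)} =
      ↑(((Finset.Icc 1 ((k + 2) / 2)).image (fun i => abPow i ++ abPow i)) ∪
        ((Finset.Icc 1 ((k + 2) / 2)).image (fun i => baPow i ++ baPow i))) := by
    ext s
    simp only [Finset.coe_union, Set.mem_union, Finset.coe_image, Set.mem_image,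
      Finset.mem_coe, Finset.mem_Icc, Set.mem_setOf_eq]
    constructor
    · rintro ⟨i, h1, h2, rfl | rfl⟩
      · exact Or.inl ⟨i, ⟨h1, h2⟩, rfl⟩
      · exact Or.inr ⟨i, ⟨h1, h2⟩, rfl⟩
    · rintro (⟨i, ⟨h1, h2⟩, rfl⟩ | ⟨i, ⟨h1, h2⟩, rfl⟩)
      · exact ⟨i, h1, h2, Or.inl rfl⟩
      · exact ⟨i, h1, h2, Or.inr rfl⟩
  have inj1 : Function.Injective (fun i => abPow i ++ abPow i) := by
    intro i j h
    have := congrArg List.length h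
    simp only [List.length_append, length_abPow] at this
    omega
  have inj2 : Function.Injective (fun i => baPow i ++ baPow i) := by
    intro i j h
    have := congrArg List.length h
    simp only [List.length_append, length_baPow] at this
    omega
  have hdisj : Disjoint ((Finset.Icc 1 ((k + 2) / 2)).image (fun i => abPow i ++ abPow i))
      ((Finset.Icc 1 ((k + 2) / 2)).image (fun i => baPow i ++ baPow i)) := by
    rw [Finset.disjoint_left]
    rintro s hs1 hs2
    simp only [Finset.mem_image, Finset.mem_Icc] at hs1 hs2
    obtain ⟨i, ⟨hi1, _⟩, rfl⟩ := hs1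
    obtain ⟨j, ⟨hj1, _⟩, hj⟩ := hs2
    have h := ((head_basq j hj1).symm.trans (congrArg List.head? hj)).trans (head_absq i hi1)
    simp [la, lb] at h
  rw [hfin, Set.ncard_coe_finset, Finset.card_union_of_disjoint hdisj,
    Finset.card_image_of_injective _ inj1, Finset.card_image_of_injective _ inj2,
    Nat.card_Icc]
  omega
end

section
/- For every k ≥ 0, the circular word (f_k), where f_k = a(ba)^{k+1}a(ba)^{k+2}a(ba)^{k+1}a(ba)^{k+2}, contains exactly 10k + 16 - (k mod 2) distinct squares. -/
def gf (k t : ℕ) : Bool :=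
  decide ((t % (4*k+8) % 2 = 1 ∧ t % (4*k+8) < 2*k+3) ∨
          (t % (4*k+8) % 2 = 0 ∧ 2*k+3 < t % (4*k+8)))

def Pg (k t : ℕ) : Prop :=
  (t % 2 = 1 ∧ (t < 2*k+3 ∨ (4*k+8 ≤ t ∧ t < 6*k+11) ∨ (8*k+16 ≤ t ∧ t < 10*k+19))) ∨
  (t % 2 = 0 ∧ ((2*k+3 < t ∧ t < 4*k+8) ∨ (6*k+11 ≤ t ∧ t < 8*k+16) ∨ 10*k+19 ≤ t))

lemma gf_iff (k t : ℕ) (ht : t < 12*k+24) : gf k t = true ↔ Pg k t := by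
  have h2 : (2:ℕ) ∣ 4*k+8 := by omega
  have hpar : t % (4*k+8) % 2 = t % 2 := Nat.mod_mod_of_dvd t h2
  unfold gf Pg
  rcases Nat.lt_or_ge t (4*k+8) with h | h
  · rw [Nat.mod_eq_of_lt h] at hpar ⊢
    simp only [decide_eq_true_eq]; omega
  rcases Nat.lt_or_ge t (8*k+16) with h' | h'
  · have e : t % (4*k+8) = t - (4*k+8) := by
      rw [Nat.mod_eq_sub_mod h, Nat.mod_eq_of_lt (by omega)]
    rw [e] at hpar ⊢
    simp only [decide_eq_true_eq]; omega
  · have e : t % (4*k+8) = t - (8*k+16) := by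
      rw [Nat.mod_eq_sub_mod h, Nat.mod_eq_sub_mod (by omega : 4*k+8 ≤ t - (4*k+8)),
        Nat.mod_eq_of_lt (by omega)]
      omega
    rw [e] at hpar ⊢
    simp only [decide_eq_true_eq]; omega

lemma gf_eq_gf (k t t' : ℕ) (h1 : t < 12*k+24) (h2 : t' < 12*k+24) :
    (gf k t = gf k t') ↔ (Pg k t ↔ Pg k t') := by
  rw [Bool.eq_iff_iff, gf_iff k t h1, gf_iff k t' h2]

lemma D_char (k t : ℕ) (ht : t + 1 < 12*k+24) :
    (gf k t = gf k (t+1)) ↔ (t = 2*k+2 ∨ t = 4*k+7 ∨ t = 6*k+10 ∨ t = 8*k+15 ∨ t = 10*k+18) := by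
  rw [gf_eq_gf k t (t+1) (by omega) ht]
  unfold Pg
  omega


def W (k p l : ℕ) : List Bool := (List.range l).map (fun j => gf k (p + j))

lemma W_length (k p l : ℕ) : (W k p l).length = l := by simp [W]

lemma W_ext_iff (k p p' l : ℕ) : W k p l = W k p' l ↔ ∀ j < l, gf k (p+j) = gf k (p'+j) := by
  constructor
  · intro h j hj
    have h1 : (W k p l)[j]'(by rw [W_length]; exact hj) =
        (W k p' l)[j]'(by rw [W_length]; exact hj) := by
      congr 1
    simpa [W] using h1
  · intro h
    exact List.map_congr_left (fun j hj => h j (List.mem_range.mp hj))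

lemma W_append (k p a b : ℕ) : W k p (a+b) = W k p a ++ W k (p+a) b := by
  unfold W
  rw [List.range_add, List.map_append, List.map_map]
  congr 1
  apply List.map_congr_left
  intro x _
  simp only [Function.comp_apply]
  congr 1
  omega

lemma W_take (k p l n : ℕ) (h : n ≤ l) : (W k p l).take n = W k p n := by
  have : l = n + (l - n) := by omega
  rw [this, W_append]
  exact List.take_left' (W_length k p n)

lemma W_drop (k p l n : ℕ) (h : n ≤ l) : (W k p l).drop n = W k (p+n) (l-n) := by
  have : l = n + (l - n) := by omega
  rw [this, W_append, List.drop_left' (W_length k p n)]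
  congr 1
  omega

lemma baPow_eq (m : ℕ) : baPow m = (List.range (2*m)).map (fun i => decide (i % 2 = 0)) := by
  induction m with
  | zero => simp [baPow]
  | succ n ih =>
    have h1 : baPow (n+1) = [lb, la] ++ baPow n := by
      simp [baPow, List.replicate_succ]
    rw [h1, ih]
    have h2 : 2*(n+1) = 2 + 2*n := by omega
    rw [h2, List.range_add, List.map_append, List.map_map]
    have hA : ([lb, la] : List Bool) = (List.range 2).map (fun i => decide (i % 2 = 0)) := by
      decide
    have hB : (List.range (2*n)).map (fun i => decide (i % 2 = 0)) =
        (List.range (2*n)).map ((fun i => decide (i % 2 = 0)) ∘ fun x => 2 + x) := by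
      apply List.map_congr_left
      intro x _
      simp only [Function.comp_apply, decide_eq_decide]
      omega
    rw [← hB, ← hA]

lemma gf_small (k t : ℕ) (h : t < 4*k+8) :
    gf k t = decide ((t % 2 = 1 ∧ t < 2*k+3) ∨ (t % 2 = 0 ∧ 2*k+3 < t)) := by
  unfold gf
  rw [Nat.mod_eq_of_lt h]

lemma xWord_eq (k : ℕ) : xWord k = W k 0 (4*k+8) := by
  have e1 : W k 0 (4*k+8) = W k 0 1 ++ W k 1 (2*k+2) ++ W k (2*k+3) 1 ++ W k (2*k+4) (2*k+4) := by
    have a1 : W k 0 (4*k+8) = W k 0 (2*k+4) ++ W k (0+(2*k+4)) (2*k+4) := by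
      rw [← W_append]; congr 1; omega
    have a2 : W k 0 (2*k+4) = W k 0 (2*k+3) ++ W k (0+(2*k+3)) 1 := by
      rw [← W_append]
    have a3 : W k 0 (2*k+3) = W k 0 1 ++ W k (0+1) (2*k+2) := by
      rw [← W_append]; congr 1; omega
    rw [a1, a2, a3]
    norm_num
  have hr1 : List.range 1 = [0] := rfl
  have c1 : W k 0 1 = [la] := by
    have h0 : gf k 0 = la := by
      rw [gf_small k 0 (by omega)]
      simp only [la, decide_eq_false_iff_not]
      omega
    simp only [W, hr1, List.map_cons, List.map_nil, Nat.add_zero, h0]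
  have c3 : W k (2*k+3) 1 = [la] := by
    have h0 : gf k (2*k+3) = la := by
      rw [gf_small k (2*k+3) (by omega)]
      simp only [la, decide_eq_false_iff_not]
      omega
    simp only [W, hr1, List.map_cons, List.map_nil, Nat.add_zero, h0]
  have c2 : W k 1 (2*k+2) = baPow (k+1) := by
    rw [baPow_eq, show 2*(k+1) = 2*k+2 by omega]
    apply List.map_congr_left
    intro x hx
    rw [List.mem_range] at hx
    rw [gf_small k (1+x) (by omega), decide_eq_decide]
    omega
  have c4 : W k (2*k+4) (2*k+4) = baPow (k+2) := by
    rw [baPow_eq, show 2*(k+2) = 2*k+4 by omega]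
    apply List.map_congr_left
    intro x hx
    rw [List.mem_range] at hx
    rw [gf_small k (2*k+4+x) (by omega), decide_eq_decide]
    omega
  rw [e1, c1, c2, c3, c4]
  rfl

lemma gf_period (k t : ℕ) : gf k (t + (4*k+8)) = gf k t := by
  unfold gf; rw [Nat.add_mod_right]

lemma fWord_eq (k : ℕ) : fWord k = W k 0 (8*k+16) := by
  unfold fWord
  rw [xWord_eq]
  have h2 : W k 0 (8*k+16) = W k 0 (4*k+8) ++ W k (0+(4*k+8)) (4*k+8) := by
    rw [← W_append]; congr 1; omega
  rw [h2]
  congr 1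
  rw [Nat.zero_add, W_ext_iff]
  intro j hj
  rw [Nat.zero_add, Nat.add_comm, gf_period]

lemma fWord_length (k : ℕ) : (fWord k).length = 8*k+16 := by rw [fWord_eq, W_length]

def Cond (k p q : ℕ) : Prop := ∀ j < q, gf k (p+j) = gf k (p+q+j)

lemma gf_period2 (k t : ℕ) : gf k (t + (8*k+16)) = gf k t := by
  rw [show t + (8*k+16) = t + (4*k+8) + (4*k+8) by omega, gf_period, gf_period]

lemma rot_eq (k i : ℕ) (h : i ≤ 8*k+16) : rot (fWord k) i = W k i (8*k+16) := by
  unfold rot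
  rw [fWord_eq, W_drop k 0 (8*k+16) i h, W_take k 0 (8*k+16) i h, Nat.zero_add]
  have h2 : W k i (8*k+16) = W k i ((8*k+16) - i) ++ W k (i + ((8*k+16) - i)) i := by
    rw [← W_append]; congr 1; omega
  rw [h2]
  congr 1
  · rw [show i + ((8*k+16) - i) = 8*k+16 by omega, W_ext_iff]
    intro j hj
    rw [show 8*k+16+j = j + (8*k+16) by omega, gf_period2, Nat.zero_add]

lemma gf_mod (k t : ℕ) : gf k t = gf k (t % (4*k+8)) := by
  unfold gf
  rw [Nat.mod_mod_of_dvd t (dvd_refl _)]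

lemma W_shift_mod (k p l : ℕ) : W k p l = W k (p % (4*k+8)) l := by
  rw [W_ext_iff]
  intro j hj
  rw [gf_mod k (p+j), gf_mod k (p % (4*k+8) + j)]
  congr 1
  conv_lhs => rw [Nat.add_mod]
  conv_rhs => rw [Nat.add_mod]
  rw [Nat.mod_mod_of_dvd p (dvd_refl _)]

lemma main_char (k : ℕ) (s : List Bool) :
    s ∈ cyclicSquares (fWord k) ↔
      ∃ p q, p < 4*k+8 ∧ 1 ≤ q ∧ q ≤ 4*k+8 ∧ Cond k p q ∧ s = W k p (2*q) := by
  constructor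
  · rintro ⟨⟨u, hu, rfl⟩, i, hi, hinf⟩
    rw [fWord_length] at hi
    rw [rot_eq k i (by omega)] at hinf
    obtain ⟨pre, post, heq⟩ := hinf
    have hlen := congrArg List.length heq
    simp only [List.length_append, W_length] at hlen
    set a := pre.length with ha
    have h1 : (W k i (8*k+16)).drop a = (u ++ u) ++ post := by
      rw [← heq, List.append_assoc, List.drop_left' ha.symm]
    have h2 : ((u ++ u) ++ post).take (u.length + u.length) = u ++ u := by
      have : (u ++ u).length = u.length + u.length := by simp
      rw [← this, List.take_left]
    rw [W_drop k i (8*k+16) a (by omega)] at h1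
    have h3 : (W k (i+a) (8*k+16-a)).take (u.length + u.length) = u ++ u := by
      rw [h1, h2]
    rw [W_take k (i+a) (8*k+16-a) (u.length + u.length) (by omega)] at h3
    -- normalize the phase
    set q := u.length with hq
    have hq1 : 1 ≤ q := by
      rcases u with _ | ⟨c, u'⟩
      · exact absurd rfl hu
      · simp [hq]
    refine ⟨(i+a) % (4*k+8), q, Nat.mod_lt _ (by omega), hq1, by omega, ?_, ?_⟩
    · -- Cond
      intro j hj
      have hw : W k ((i+a) % (4*k+8)) (2*q) = u ++ u := by
        rw [← W_shift_mod, show 2*q = q + q by omega, ← h3]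
      have hsplit : W k ((i+a) % (4*k+8)) (q+q) =
          W k ((i+a) % (4*k+8)) q ++ W k ((i+a) % (4*k+8) + q) q := W_append _ _ _ _
      rw [show 2*q = q+q by omega] at hw
      rw [hsplit] at hw
      have huu : W k ((i+a) % (4*k+8)) q = u ∧ W k ((i+a) % (4*k+8) + q) q = u := by
        constructor
        · exact List.append_inj_left hw (by rw [W_length])
        · exact List.append_inj_right hw (by rw [W_length])
      have := huu.1.trans huu.2.symm
      rw [W_ext_iff] at this
      exact this j hj
    · rw [show 2*q = q + q by omega, ← h3, ← W_shift_mod]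
  · rintro ⟨p, q, hp, hq1, hqM, hcond, rfl⟩
    constructor
    · refine ⟨W k p q, ?_, ?_⟩
      · have := W_length k p q
        intro hnil
        rw [hnil] at this
        simp at this
        omega
      · rw [show 2*q = q + q by omega, W_append]
        congr 1
        rw [W_ext_iff]
        intro j hj
        exact (hcond j hj).symm
    · refine ⟨p, by rw [fWord_length]; omega, ?_⟩
      rw [rot_eq k p (by omega)]
      have : W k p (8*k+16) = W k p (2*q) ++ W k (p + 2*q) (8*k+16 - 2*q) := by
        rw [← W_append]; congr 1; omega
      rw [this]
      exact ((W k p (2*q)).prefix_append _).isInfix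

lemma alt_eval (k a l : ℕ) (h : ∀ t, a ≤ t → t+1 < a+l → gf k t ≠ gf k (t+1)) :
    ∀ j, j < l → gf k (a+j) = (if j % 2 = 0 then gf k a else !(gf k a)) := by
  intro j
  induction j with
  | zero => intro _; simp
  | succ n ih =>
    intro hn
    have h1 := ih (by omega)
    have h2 : gf k (a+n) ≠ gf k (a+n+1) := h (a+n) (by omega) (by omega)
    have h3 : gf k (a+(n+1)) = !(gf k (a+n)) := by
      rw [show a+(n+1) = a+n+1 by omega]
      revert h2
      cases gf k (a+n) <;> cases gf k (a+n+1) <;> simp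
    rw [h3, h1]
    by_cases hpar : n % 2 = 0
    · rw [if_pos hpar, if_neg (by omega)]
    · rw [if_neg hpar, if_pos (by omega), Bool.not_not]

theorem classify (k p q : ℕ) (hp : p < 4*k+8) (hq1 : 1 ≤ q) (hqM : q ≤ 4*k+8) (hc : Cond k p q) :
    q = 4*k+8 ∨
    (q % 2 = 1 ∧ q ≤ 2*k+3 ∧ (p = 2*k+3-q ∨ p = 4*k+8-q)) ∨
    (q = 2*k+3 ∧ 2*k+6 ≤ p ∧ p ≤ 4*k+7) ∨
    (q = 2*k+5 ∧ p ≤ 2*k+1) ∨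
    (q % 2 = 0 ∧ 2 ≤ q ∧ q ≤ k+2 ∧ ∀ t, p ≤ t → t+1 < p+2*q → gf k t ≠ gf k (t+1)) := by
  by_cases hqF : q = 4*k+8
  · exact Or.inl hqF
  have hqlt : q < 4*k+8 := lt_of_le_of_ne hqM hqF
  have align : ∀ t, p ≤ t → t+1 < p+q → ((gf k t = gf k (t+1)) ↔ (gf k (t+q) = gf k (t+q+1))) := by
    intro t h1 h2
    have e1 := hc (t-p) (by omega)
    have e2 := hc (t+1-p) (by omega)
    rw [show p+(t-p) = t by omega, show p+q+(t-p) = t+q by omega] at e1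
    rw [show p+(t+1-p) = t+1 by omega, show p+q+(t+1-p) = t+q+1 by omega] at e2
    rw [e1, e2]
  by_cases hpar : q % 2 = 0
  · -- even case
    have noflip : ∀ t, p ≤ t → t+1 < p+q → gf k t = gf k (t+1) → False := by
      intro t h1 h2 hd
      have hd2 : gf k (t+q) = gf k (t+q+1) := (align t h1 h2).mp hd
      rw [D_char k t (by omega)] at hd
      rw [D_char k (t+q) (by omega)] at hd2
      omega
    have noflip2 : ∀ t, p ≤ t → t+1 < p+2*q → gf k t ≠ gf k (t+1) := by
      intro t h1 h2
      by_cases hcase : t+1 < p+q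
      · exact fun hd => noflip t h1 hcase hd
      by_cases hcase2 : t+1 = p+q
      · -- boundary
        intro hd
        have halt := alt_eval k p q (fun t' a1 a2 => fun hd' => noflip t' a1 a2 hd')
        have hv := halt (q-1) (by omega)
        rw [show p+(q-1) = t by omega] at hv
        rw [if_neg (by omega)] at hv
        have h0 := hc 0 (by omega)
        simp only [Nat.add_zero] at h0
        rw [show t+1 = p+q by omega] at hd
        rw [hv, ← h0] at hd
        revert hd
        cases gf k p <;> simp
      · intro hd
        have e1 := hc (t-q-p) (by omega)
        have e2 := hc (t+1-q-p) (by omega)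
        rw [show p+(t-q-p) = t-q by omega, show p+q+(t-q-p) = t by omega] at e1
        rw [show p+(t+1-q-p) = t+1-q by omega, show p+q+(t+1-q-p) = t+1 by omega] at e2
        exact noflip (t-q) (by omega) (by omega)
          (by rw [show t-q+1 = t+1-q by omega, e1, e2]; exact hd)
    have hd0 : ∃ t0, p ≤ t0 ∧ t0 ≤ p+2*k+4 ∧ gf k t0 = gf k (t0+1) := by
      by_cases hple : p ≤ 2*k+2
      · exact ⟨2*k+2, by omega, by omega, by rw [D_char k (2*k+2) (by omega)]; omega⟩
      · exact ⟨4*k+7, by omega, by omega, by rw [D_char k (4*k+7) (by omega)]; omega⟩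
    obtain ⟨t0, ht1, ht2, ht3⟩ := hd0
    have hbound : p + 2*q ≤ t0 + 1 := by
      by_contra hcon
      exact noflip2 t0 ht1 (by omega) ht3
    right; right; right; right
    exact ⟨hpar, by omega, by omega, noflip2⟩
  · -- odd case
    have hparo : q % 2 = 1 := by omega
    by_cases hint : ∃ t0, p ≤ t0 ∧ t0+1 < p+q ∧ gf k t0 = gf k (t0+1)
    · obtain ⟨t0, h1, h2, hd⟩ := hint
      have hd2 : gf k (t0+q) = gf k (t0+q+1) := (align t0 h1 h2).mp hd
      rw [D_char k t0 (by omega)] at hd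
      rw [D_char k (t0+q) (by omega)] at hd2
      have hcases : (q = 2*k+3 ∧ t0 = 4*k+7) ∨ (q = 2*k+5 ∧ (t0 = 2*k+2 ∨ t0 = 6*k+10)) := by
        omega
      rcases hcases with ⟨hq, ht0⟩ | ⟨hq, ht0⟩
      · right; right; left
        exact ⟨hq, by omega, by omega⟩
      · rcases ht0 with ht0 | ht0
        · by_cases hp22 : p = 2*k+2
          · exfalso
            have hx := hc (2*k+4) (by omega)
            rw [hp22, hq] at hx
            rw [show 2*k+2+(2*k+4) = 4*k+6 by omega,
              show 2*k+2+(2*k+5)+(2*k+4) = 6*k+11 by omega] at hx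
            rw [gf_eq_gf k _ _ (by omega) (by omega)] at hx
            simp only [Pg] at hx
            omega
          · right; right; right; left
            exact ⟨hq, by omega⟩
        · exfalso
          -- p = 4k+7 forced
          have hx := hc 0 (by omega)
          simp only [Nat.add_zero] at hx
          have hp47 : p = 4*k+7 := by omega
          rw [hp47, hq] at hx
          rw [show 4*k+7+(2*k+5) = 6*k+12 by omega] at hx
          rw [gf_eq_gf k _ _ (by omega) (by omega)] at hx
          simp only [Pg] at hx
          omega
    · push_neg at hint
      have halt := alt_eval k p q hint
      have h0 := hc 0 (by omega)
      simp only [Nat.add_zero] at h0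
      have hv := halt (q-1) (by omega)
      rw [if_pos (by omega)] at hv
      have hd : gf k (p+q-1) = gf k ((p+q-1)+1) := by
        rw [show (p+q-1)+1 = p+q by omega, show p+q-1 = p+(q-1) by omega, hv]
        exact h0
      rw [D_char k (p+q-1) (by omega)] at hd
      have hdd : p+q = 2*k+3 ∨ p+q = 4*k+8 ∨ p+q = 6*k+11 := by omega
      rcases hdd with hdd | hdd | hdd
      · right; left
        exact ⟨hparo, by omega, Or.inl (by omega)⟩
      · by_cases hq5 : q ≤ 2*k+3
        · right; left
          exact ⟨hparo, hq5, Or.inr (by omega)⟩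
        · exfalso
          have hx := hc (2*k+3) (by omega)
          rw [show p+(2*k+3) = 6*k+11-q by omega,
            show p+q+(2*k+3) = 6*k+11 by omega] at hx
          rw [gf_eq_gf k _ _ (by omega) (by omega)] at hx
          simp only [Pg] at hx
          omega
      · exfalso
        have hgp : gf k p = gf k (6*k+10) := by
          rw [show (6:ℕ)*k+10 = p+(q-1) by omega, hv]
        rw [gf_eq_gf k _ _ (by omega) (by omega)] at hgp
        simp only [Pg] at hgp
        omega

lemma cond_E (k p : ℕ) : Cond k p (4*k+8) := by
  intro j hj
  rw [show p+(4*k+8)+j = (p+j)+(4*k+8) by omega, gf_period]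

lemma cond_O (k q : ℕ) (hodd : q % 2 = 1) (hq : q ≤ 2*k+3) : Cond k (2*k+3-q) q := by
  intro j hj
  rw [show 2*k+3-q+q+j = 2*k+3+j by omega]
  rw [gf_eq_gf k _ _ (by omega) (by omega)]
  simp only [Pg]
  omega

lemma cond_C (k p : ℕ) (h1 : 2*k+6 ≤ p) (h2 : p ≤ 4*k+7) : Cond k p (2*k+3) := by
  intro j hj
  rw [gf_eq_gf k _ _ (by omega) (by omega)]
  simp only [Pg]
  omega

lemma cond_D (k p : ℕ) (h : p ≤ 2*k+1) : Cond k p (2*k+5) := by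
  intro j hj
  rw [gf_eq_gf k _ _ (by omega) (by omega)]
  simp only [Pg]
  omega

lemma cond_V (k p q : ℕ) (hq : q ≤ k+2) (hp : p = 2*k+3 ∨ p = 2*k+4) (he : q % 2 = 0) :
    Cond k p q := by
  intro j hj
  rw [gf_eq_gf k _ _ (by omega) (by omega)]
  simp only [Pg]
  omega

lemma WO_shift (k q : ℕ) (hodd : q % 2 = 1) (hq : q ≤ 2*k+3) :
    W k (4*k+8-q) (2*q) = W k (2*k+3-q) (2*q) := by
  rw [W_ext_iff]
  intro j hj
  rw [gf_eq_gf k _ _ (by omega) (by omega)]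
  simp only [Pg]
  omega

lemma WV_eq (k p q : ℕ) (hp : p < 4*k+8) (hq2 : 2 ≤ q) (hqk : q ≤ k+2) (heven : q % 2 = 0)
    (halt : ∀ t, p ≤ t → t+1 < p+2*q → gf k t ≠ gf k (t+1)) :
    W k p (2*q) = W k (2*k+3) (2*q) ∨ W k p (2*q) = W k (2*k+4) (2*q) := by
  have hx := alt_eval k p (2*q) halt
  have hA : ∀ j, j < 2*q → gf k (2*k+3+j) = decide (j % 2 = 1) := by
    intro j hj
    rw [Bool.eq_iff_iff, gf_iff k _ (by omega), decide_eq_true_eq]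
    simp only [Pg]
    omega
  have hB : ∀ j, j < 2*q → gf k (2*k+4+j) = decide (j % 2 = 0) := by
    intro j hj
    rw [Bool.eq_iff_iff, gf_iff k _ (by omega), decide_eq_true_eq]
    simp only [Pg]
    omega
  cases hgp : gf k p
  · left
    rw [W_ext_iff]
    intro j hj
    rw [hx j hj, hA j hj, hgp]
    by_cases hj2 : j % 2 = 0
    · rw [if_pos hj2]
      simp
      omega
    · rw [if_neg hj2]
      simp
      omega
  · right
    rw [W_ext_iff]
    intro j hj
    rw [hx j hj, hB j hj, hgp]
    by_cases hj2 : j % 2 = 0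
    · rw [if_pos hj2]
      simp
      omega
    · rw [if_neg hj2]
      simp
      omega

def SE (k : ℕ) : Finset (List Bool) := (Finset.range (4*k+8)).image (fun p => W k p (8*k+16))
def SO (k : ℕ) : Finset (List Bool) :=
  (Finset.range (k+2)).image (fun t => W k (2*k+2-2*t) (4*t+2))
def SC (k : ℕ) : Finset (List Bool) := (Finset.Icc (2*k+6) (4*k+7)).image (fun p => W k p (4*k+6))
def SD (k : ℕ) : Finset (List Bool) := (Finset.range (2*k+2)).image (fun p => W k p (4*k+10))
def SA (k : ℕ) : Finset (List Bool) := (Finset.range ((k+2)/2)).image (fun t => W k (2*k+3) (4*t+4))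
def SB (k : ℕ) : Finset (List Bool) := (Finset.range ((k+2)/2)).image (fun t => W k (2*k+4) (4*t+4))
def SF (k : ℕ) : Finset (List Bool) := SE k ∪ SO k ∪ SC k ∪ SD k ∪ SA k ∪ SB k

lemma mem_TF (k : ℕ) (s : List Bool) : s ∈ SF k ↔
    (∃ p < 4*k+8, W k p (8*k+16) = s) ∨
    (∃ t < k+2, W k (2*k+2-2*t) (4*t+2) = s) ∨
    (∃ p, (2*k+6 ≤ p ∧ p ≤ 4*k+7) ∧ W k p (4*k+6) = s) ∨
    (∃ p < 2*k+2, W k p (4*k+10) = s) ∨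
    (∃ t < (k+2)/2, W k (2*k+3) (4*t+4) = s) ∨
    (∃ t < (k+2)/2, W k (2*k+4) (4*t+4) = s) := by
  simp only [SF, Finset.mem_union, SE, SO, SC, SD, SA, SB, Finset.mem_image,
    Finset.mem_range, Finset.mem_Icc, or_assoc]

lemma cyc_eq (k : ℕ) : cyclicSquares (fWord k) = ↑(SF k) := by
  ext s
  rw [main_char k s, Finset.mem_coe, mem_TF]
  constructor
  · rintro ⟨p, q, hp, hq1, hqM, hcond, rfl⟩
    have hclass := classify k p q hp hq1 hqM hcond
    rcases hclass with hE | ⟨hodd, hqle, hO⟩ | ⟨hq, hp1, hp2⟩ | ⟨hq, hple⟩ | ⟨heven, hq2, hqk, halt⟩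
    · left
      exact ⟨p, hp, by rw [hE, show 2*(4*k+8) = 8*k+16 by omega]⟩
    · right; left
      refine ⟨(q-1)/2, by omega, ?_⟩
      have e1 : 2*k+2-2*((q-1)/2) = 2*k+3-q := by omega
      have e2 : 4*((q-1)/2)+2 = 2*q := by omega
      rw [e1, e2]
      rcases hO with hO | hO
      · rw [hO]
      · rw [hO, WO_shift k q hodd hqle]
    · right; right; left
      exact ⟨p, ⟨hp1, hp2⟩, by rw [hq, show 2*(2*k+3) = 4*k+6 by omega]⟩
    · right; right; right; left
      exact ⟨p, by omega, by rw [hq, show 2*(2*k+5) = 4*k+10 by omega]⟩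
    · rcases WV_eq k p q hp hq2 hqk heven halt with hw | hw
      · right; right; right; right; left
        refine ⟨q/2-1, by omega, ?_⟩
        rw [show 4*(q/2-1)+4 = 2*q by omega, hw]
      · right; right; right; right; right
        refine ⟨q/2-1, by omega, ?_⟩
        rw [show 4*(q/2-1)+4 = 2*q by omega, hw]
  · rintro (⟨p, hp, rfl⟩ | ⟨t, ht, rfl⟩ | ⟨p, ⟨hp1, hp2⟩, rfl⟩ | ⟨p, hp, rfl⟩ |
      ⟨t, ht, rfl⟩ | ⟨t, ht, rfl⟩)
    · exact ⟨p, 4*k+8, hp, by omega, by omega, cond_E k p,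
        by rw [show 2*(4*k+8) = 8*k+16 by omega]⟩
    · refine ⟨2*k+2-2*t, 2*t+1, by omega, by omega, by omega, ?_, ?_⟩
      · have := cond_O k (2*t+1) (by omega) (by omega)
        rw [show 2*k+3-(2*t+1) = 2*k+2-2*t by omega] at this
        exact this
      · rw [show 2*(2*t+1) = 4*t+2 by omega]
    · exact ⟨p, 2*k+3, by omega, by omega, by omega, cond_C k p hp1 hp2,
        by rw [show 2*(2*k+3) = 4*k+6 by omega]⟩
    · exact ⟨p, 2*k+5, by omega, by omega, by omega, cond_D k p (by omega),
        by rw [show 2*(2*k+5) = 4*k+10 by omega]⟩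
    · refine ⟨2*k+3, 2*t+2, by omega, by omega, by omega,
        cond_V k (2*k+3) (2*t+2) (by omega) (Or.inl rfl) (by omega), ?_⟩
      rw [show 2*(2*t+2) = 4*t+4 by omega]
    · refine ⟨2*k+4, 2*t+2, by omega, by omega, by omega,
        cond_V k (2*k+4) (2*t+2) (by omega) (Or.inr rfl) (by omega), ?_⟩
      rw [show 2*(2*t+2) = 4*t+4 by omega]

lemma W_eq_len (k p l p' l' : ℕ) (h : W k p l = W k p' l') : l = l' := by
  have := congrArg List.length h
  simpa [W_length] using this

lemma defect_transfer (k p p' l j : ℕ) (h : W k p l = W k p' l) (hj : j+1 < l) :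
    (gf k (p+j) = gf k (p+j+1)) ↔ (gf k (p'+j) = gf k (p'+j+1)) := by
  rw [W_ext_iff] at h
  have a1 := h j (by omega)
  have a2 := h (j+1) (by omega)
  rw [show p+(j+1) = p+j+1 by omega, show p'+(j+1) = p'+j+1 by omega] at a2
  rw [a1, a2]

lemma injE_aux (k p p' : ℕ) (hp : p < 4*k+8) (hp' : p' < 4*k+8)
    (heq : W k p (8*k+16) = W k p' (8*k+16)) : p = p' := by
  have d1 := defect_transfer k p p' (8*k+16) (6*k+10-p) heq (by omega)
  have d2 := defect_transfer k p p' (8*k+16) (4*k+7-p) heq (by omega)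
  have d3 := defect_transfer k p p' (8*k+16) (6*k+10-p') heq (by omega)
  have d4 := defect_transfer k p p' (8*k+16) (4*k+7-p') heq (by omega)
  rw [D_char k _ (by omega), D_char k _ (by omega)] at d1 d2 d3 d4
  omega

lemma card_SE (k : ℕ) : (SE k).card = 4*k+8 := by
  rw [SE, Finset.card_image_of_injOn, Finset.card_range]
  intro p hp p' hp' heq
  rw [Finset.mem_coe, Finset.mem_range] at hp hp'
  exact injE_aux k p p' hp hp' heq

lemma card_SO (k : ℕ) : (SO k).card = k+2 := by
  rw [SO, Finset.card_image_of_injOn, Finset.card_range]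
  intro t _ t' _ heq
  have := W_eq_len _ _ _ _ _ heq
  omega

lemma card_SC (k : ℕ) : (SC k).card = 2*k+2 := by
  rw [SC, Finset.card_image_of_injOn, Nat.card_Icc]
  · omega
  intro p hp p' hp' heq
  rw [Finset.mem_coe, Finset.mem_Icc] at hp hp'
  have d1 := defect_transfer k p p' (4*k+6) (4*k+7-p) heq (by omega)
  have d2 := defect_transfer k p p' (4*k+6) (4*k+7-p') heq (by omega)
  rw [D_char k _ (by omega), D_char k _ (by omega)] at d1 d2
  omega

lemma card_SD (k : ℕ) : (SD k).card = 2*k+2 := by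
  rw [SD, Finset.card_image_of_injOn, Finset.card_range]
  intro p hp p' hp' heq
  rw [Finset.mem_coe, Finset.mem_range] at hp hp'
  have d1 := defect_transfer k p p' (4*k+10) (2*k+2-p) heq (by omega)
  have d2 := defect_transfer k p p' (4*k+10) (2*k+2-p') heq (by omega)
  rw [D_char k _ (by omega), D_char k _ (by omega)] at d1 d2
  omega

lemma card_SA (k : ℕ) : (SA k).card = (k+2)/2 := by
  rw [SA, Finset.card_image_of_injOn, Finset.card_range]
  intro t _ t' _ heq
  have := W_eq_len _ _ _ _ _ heq
  omega

lemma card_SB (k : ℕ) : (SB k).card = (k+2)/2 := by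
  rw [SB, Finset.card_image_of_injOn, Finset.card_range]
  intro t _ t' _ heq
  have := W_eq_len _ _ _ _ _ heq
  omega

lemma len_SE (k : ℕ) (s : List Bool) (h : s ∈ SE k) : s.length = 8*k+16 := by
  simp only [SE, Finset.mem_image] at h
  obtain ⟨p, _, rfl⟩ := h
  exact W_length _ _ _

lemma len_SO (k : ℕ) (s : List Bool) (h : s ∈ SO k) : ∃ t ≤ k+1, s.length = 4*t+2 := by
  simp only [SO, Finset.mem_image, Finset.mem_range] at h
  obtain ⟨t, ht, rfl⟩ := h
  exact ⟨t, by omega, W_length _ _ _⟩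

lemma len_SC (k : ℕ) (s : List Bool) (h : s ∈ SC k) : s.length = 4*k+6 := by
  simp only [SC, Finset.mem_image] at h
  obtain ⟨p, _, rfl⟩ := h
  exact W_length _ _ _

lemma len_SD (k : ℕ) (s : List Bool) (h : s ∈ SD k) : s.length = 4*k+10 := by
  simp only [SD, Finset.mem_image] at h
  obtain ⟨p, _, rfl⟩ := h
  exact W_length _ _ _

lemma len_SA (k : ℕ) (s : List Bool) (h : s ∈ SA k) : ∃ t < (k+2)/2, s.length = 4*t+4 := by
  simp only [SA, Finset.mem_image, Finset.mem_range] at h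
  obtain ⟨t, ht, rfl⟩ := h
  exact ⟨t, ht, W_length _ _ _⟩

lemma len_SB (k : ℕ) (s : List Bool) (h : s ∈ SB k) : ∃ t < (k+2)/2, s.length = 4*t+4 := by
  simp only [SB, Finset.mem_image, Finset.mem_range] at h
  obtain ⟨t, ht, rfl⟩ := h
  exact ⟨t, ht, W_length _ _ _⟩

lemma disj_SO_SC (k : ℕ) : Disjoint (SO k) (SC k) := by
  rw [Finset.disjoint_left]
  intro s hO hC
  obtain ⟨t, ht, hlen⟩ := len_SO k s hO
  have hlen2 := len_SC k s hC
  have ht1 : t = k+1 := by omega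
  simp only [SO, Finset.mem_image, Finset.mem_range] at hO
  simp only [SC, Finset.mem_image, Finset.mem_Icc] at hC
  obtain ⟨t', ht', hs1⟩ := hO
  obtain ⟨p', hp', hs2⟩ := hC
  have hlt : t' = k+1 := by
    have := W_eq_len _ _ _ _ _ (hs1.trans hs2.symm)
    omega
  have heq : W k 0 (4*k+6) = W k p' (4*k+6) := by
    have h0 := hs1.trans hs2.symm
    rw [hlt] at h0
    rw [show (0:ℕ) = 2*k+2-2*(k+1) by omega, show (4*k+6:ℕ) = 4*(k+1)+2 by omega]
    exact h0
  have d1 := defect_transfer k 0 p' (4*k+6) (4*k+7-p') heq (by omega)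
  rw [D_char k _ (by omega), D_char k _ (by omega)] at d1
  omega

lemma disj_SA_SB (k : ℕ) : Disjoint (SA k) (SB k) := by
  rw [Finset.disjoint_left]
  intro s hA hB
  simp only [SA, Finset.mem_image, Finset.mem_range] at hA
  simp only [SB, Finset.mem_image, Finset.mem_range] at hB
  obtain ⟨t, ht, hs1⟩ := hA
  obtain ⟨t', ht', hs2⟩ := hB
  have hlt : t = t' := by
    have := W_eq_len _ _ _ _ _ (hs1.trans hs2.symm)
    omega
  subst hlt
  have heq := hs1.trans hs2.symm
  rw [W_ext_iff] at heq
  have h0 := heq 0 (by omega)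
  simp only [Nat.add_zero] at h0
  rw [gf_eq_gf k _ _ (by omega) (by omega)] at h0
  simp only [Pg] at h0
  omega

theorem final_count (k : ℕ) : (cyclicSquares (fWord k)).ncard = 10*k+16 - k % 2 := by
  have dEO : Disjoint (SE k) (SO k) := by
    rw [Finset.disjoint_left]
    intro s h1 h2
    have l1 := len_SE k s h1
    obtain ⟨t, ht, l2⟩ := len_SO k s h2
    omega
  have dEC : Disjoint (SE k) (SC k) := by
    rw [Finset.disjoint_left]
    intro s h1 h2
    have l1 := len_SE k s h1
    have l2 := len_SC k s h2
    omega
  have dED : Disjoint (SE k) (SD k) := by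
    rw [Finset.disjoint_left]
    intro s h1 h2
    have l1 := len_SE k s h1
    have l2 := len_SD k s h2
    omega
  have dEA : Disjoint (SE k) (SA k) := by
    rw [Finset.disjoint_left]
    intro s h1 h2
    have l1 := len_SE k s h1
    obtain ⟨t, ht, l2⟩ := len_SA k s h2
    omega
  have dEB : Disjoint (SE k) (SB k) := by
    rw [Finset.disjoint_left]
    intro s h1 h2
    have l1 := len_SE k s h1
    obtain ⟨t, ht, l2⟩ := len_SB k s h2
    omega
  have dOD : Disjoint (SO k) (SD k) := by
    rw [Finset.disjoint_left]
    intro s h1 h2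
    obtain ⟨t, ht, l1⟩ := len_SO k s h1
    have l2 := len_SD k s h2
    omega
  have dOA : Disjoint (SO k) (SA k) := by
    rw [Finset.disjoint_left]
    intro s h1 h2
    obtain ⟨t, ht, l1⟩ := len_SO k s h1
    obtain ⟨t', ht', l2⟩ := len_SA k s h2
    omega
  have dOB : Disjoint (SO k) (SB k) := by
    rw [Finset.disjoint_left]
    intro s h1 h2
    obtain ⟨t, ht, l1⟩ := len_SO k s h1
    obtain ⟨t', ht', l2⟩ := len_SB k s h2
    omega
  have dCD : Disjoint (SC k) (SD k) := by
    rw [Finset.disjoint_left]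
    intro s h1 h2
    have l1 := len_SC k s h1
    have l2 := len_SD k s h2
    omega
  have dCA : Disjoint (SC k) (SA k) := by
    rw [Finset.disjoint_left]
    intro s h1 h2
    have l1 := len_SC k s h1
    obtain ⟨t, ht, l2⟩ := len_SA k s h2
    omega
  have dCB : Disjoint (SC k) (SB k) := by
    rw [Finset.disjoint_left]
    intro s h1 h2
    have l1 := len_SC k s h1
    obtain ⟨t, ht, l2⟩ := len_SB k s h2
    omega
  have dDA : Disjoint (SD k) (SA k) := by
    rw [Finset.disjoint_left]
    intro s h1 h2
    have l1 := len_SD k s h1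
    obtain ⟨t, ht, l2⟩ := len_SA k s h2
    omega
  have dDB : Disjoint (SD k) (SB k) := by
    rw [Finset.disjoint_left]
    intro s h1 h2
    have l1 := len_SD k s h1
    obtain ⟨t, ht, l2⟩ := len_SB k s h2
    omega
  have dOC := disj_SO_SC k
  have dAB := disj_SA_SB k
  have h2 : Disjoint (SE k ∪ SO k) (SC k) := by
    simp only [Finset.disjoint_union_left]
    exact ⟨dEC, dOC⟩
  have h3 : Disjoint (SE k ∪ SO k ∪ SC k) (SD k) := by
    simp only [Finset.disjoint_union_left]
    exact ⟨⟨dED, dOD⟩, dCD⟩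
  have h4 : Disjoint (SE k ∪ SO k ∪ SC k ∪ SD k) (SA k) := by
    simp only [Finset.disjoint_union_left]
    exact ⟨⟨⟨dEA, dOA⟩, dCA⟩, dDA⟩
  have h5 : Disjoint (SE k ∪ SO k ∪ SC k ∪ SD k ∪ SA k) (SB k) := by
    simp only [Finset.disjoint_union_left]
    exact ⟨⟨⟨⟨dEB, dOB⟩, dCB⟩, dDB⟩, dAB⟩
  rw [cyc_eq, Set.ncard_coe_finset, SF,
    Finset.card_union_of_disjoint h5,
    Finset.card_union_of_disjoint h4,
    Finset.card_union_of_disjoint h3,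
    Finset.card_union_of_disjoint h2,
    Finset.card_union_of_disjoint dEO,
    card_SE, card_SO, card_SC, card_SD, card_SA, card_SB]
  omega

/-- The circular word `(f_k)` contains exactly `10k + 16 - (k mod 2)` distinct squares. -/
theorem stmt6 (k : ℕ) :
    (cyclicSquares (fWord k)).ncard = 10 * k + 16 - k % 2 :=
  final_count k
end

section
/- For every n₀ there exists n ≥ n₀ and a word w of length n over {a, b} such that the number of distinct squares occurring in the circular word (w) is at least 1.25·n - C for an absolute constant C. -/


-- basics
lemma baPow_succ (m : ℕ) : baPow (m+1) = [lb, la] ++ baPow m := by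
  simp [baPow, List.replicate_succ]

lemma baPow_succ' (m : ℕ) : baPow (m+1) = baPow m ++ [lb, la] := by
  simp [baPow, List.replicate_succ']

lemma baPow_add (m n : ℕ) : baPow (m+n) = baPow m ++ baPow n := by
  induction n with
  | zero => simp [baPow]
  | succ n ih => rw [show m + (n+1) = (m+n)+1 by ring, baPow_succ', ih, baPow_succ']
                 simp

lemma abPow_succ (m : ℕ) : abPow (m+1) = [la, lb] ++ abPow m := by
  simp [abPow, List.replicate_succ]

lemma abPow_add (m n : ℕ) : abPow (m+n) = abPow m ++ abPow n := by
  induction n with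
  | zero => simp [abPow]
  | succ n ih => rw [show m + (n+1) = (m+n)+1 by ring]
                 rw [show abPow ((m+n)+1) = abPow (m+n) ++ [la,lb] by
                       simp [abPow, List.replicate_succ']]
                 rw [ih, show abPow (n+1) = abPow n ++ [la,lb] by
                       simp [abPow, List.replicate_succ']]
                 simp

lemma baPow_length (m : ℕ) : (baPow m).length = 2*m := by
  simp [baPow]; ring

lemma abPow_length (m : ℕ) : (abPow m).length = 2*m := by
  simp [abPow]; ring

lemma la_baPow (m : ℕ) : [la] ++ baPow m = abPow m ++ [la] := by
  induction m with
  | zero => simp [baPow, abPow]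
  | succ n ih =>
      rw [baPow_succ, abPow_succ]
      simp only [List.cons_append, List.nil_append, List.append_assoc] at ih ⊢
      rw [ih]

lemma count_baPow_lb (m : ℕ) : (baPow m).count lb = m := by
  induction m with
  | zero => simp [baPow]
  | succ n ih =>
      rw [baPow_succ, List.count_append, ih, show List.count lb [lb, la] = 1 from rfl]
      omega

lemma count_baPow_la (m : ℕ) : (baPow m).count la = m := by
  induction m with
  | zero => simp [baPow]
  | succ n ih =>
      rw [baPow_succ, List.count_append, ih, show List.count la [lb, la] = 1 from rfl]
      omega

lemma rot_length {α : Type*} (w : List α) (i : ℕ) : (rot w i).length = w.length := by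
  simp [rot]; omega

lemma rot_getElem? {α : Type*} (w : List α) (i m : ℕ) (hi : i ≤ w.length)
    (hm : m < w.length) : (rot w i)[m]? = w[(i + m) % w.length]? := by
  rcases lt_or_ge m (w.length - i) with h | h
  · rw [rot, List.getElem?_append_left (by simp; omega), List.getElem?_drop,
      Nat.mod_eq_of_lt (by omega)]
  · rw [rot, List.getElem?_append_right (by simp; omega)]
    rw [List.length_drop, List.getElem?_take_of_lt (by omega)]
    rw [Nat.mod_eq_sub_mod (by omega), Nat.mod_eq_of_lt (by omega)]
    congr 1
    omega
-- assume p1 contents; test standalone pieces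
section per
variable {α : Type*} {β : Type*}

lemma period_mul_s7 {c : ℕ → α} {g : ℕ} (h : ∀ m, c (m + g) = c m) :
    ∀ p m, c (m + g * p) = c m := by
  intro p
  induction p with
  | zero => simp
  | succ p ih =>
      intro m
      rw [show m + g*(p+1) = (m + g*p) + g by ring, h, ih]

lemma period_gcd {c : ℕ → α} :
    ∀ d n, (∀ m, c (m + d) = c m) → (∀ m, c (m + n) = c m) →
      ∀ m, c (m + Nat.gcd d n) = c m := by
  intro d
  induction d using Nat.strong_induction_on with
  | _ d ih =>
    intro n hd hn m
    rcases Nat.eq_zero_or_pos d with h0 | h0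
    · subst h0; simpa using hn m
    · rw [Nat.gcd_rec d n]
      apply ih (n % d) (Nat.mod_lt _ h0) d _ hd
      intro m'
      have h1 : c (m' + n % d + d * (n / d)) = c (m' + n % d) := period_mul_s7 hd _ _
      have h2 : m' + n % d + d * (n / d) = m' + n := by
        have := Nat.mod_add_div n d
        omega
      rw [h2] at h1
      rw [← h1, hn]

lemma card_filter_range_mul {c : ℕ → α} {g : ℕ} (h : ∀ m, c (m + g) = c m)
    (P : α → Prop) [DecidablePred P] (e : ℕ) :
    ((Finset.range (g * e)).filter (fun m => P (c m))).card
      = e * ((Finset.range g).filter (fun m => P (c m))).card := by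
  induction e with
  | zero => simp
  | succ e ih =>
      rw [Finset.card_filter, show g * (e+1) = g*e + g by ring,
        Finset.sum_range_add]
      rw [Finset.card_filter] at ih
      rw [ih]
      have : ∀ x, c (g * e + x) = c x := by
        intro x
        rw [show g*e + x = x + g*e by ring, period_mul_s7 h]
      simp only [this]
      rw [← Finset.card_filter]
      ring

end per

lemma count_eq_card_filter (z : List Bool) (b : Bool) :
    z.count b = ((Finset.range z.length).filter (fun m => z[m]? = some b)).card := by
  induction z with
  | nil => simp
  | cons hd tl ih =>
      rw [List.count_cons, Finset.card_filter, List.length_cons, Finset.sum_range_succ',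
        ← Finset.card_filter]
      simp only [List.getElem?_cons_succ, List.getElem?_cons_zero, Option.some.injEq]
      rw [← ih]
      congr 1
      simp

lemma rot_injOn (z : List Bool) (hco : Nat.Coprime (z.count lb) (z.count la)) :
    ∀ i j, i ≤ j → j < z.length → rot z i = rot z j → i = j := by
  intro i j hij hj hrot
  by_contra hne
  set n := z.length with hn
  have hilt : i < j := lt_of_le_of_ne hij hne
  have hnpos : 0 < n := by omega
  set c : ℕ → Option Bool := fun m => z[m % n]? with hc
  have hcn : ∀ m, c (m + n) = c m := by
    intro m; simp only [hc, Nat.add_mod_right]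
  have hmod : ∀ m, c m = c (m % n) := by
    intro m
    simp only [hc, Nat.mod_mod_of_dvd m (dvd_refl n)]
  have key : ∀ m, m < n → c (i + m) = c (j + m) := by
    intro m hm
    have h1 := rot_getElem? z i m (by omega) hm
    have h2 := rot_getElem? z j m (by omega) hm
    rw [hrot] at h1
    rw [h1] at h2
    simp only [hc, hn]
    exact h2
  have key' : ∀ m, c (i + m) = c (j + m) := by
    intro m
    have e1 : ∀ a : ℕ, c (a + m) = c (a + m % n) := by
      intro a
      rw [hmod (a + m), hmod (a + m % n), Nat.add_mod a m, Nat.add_mod a (m % n),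
        Nat.mod_mod_of_dvd m (dvd_refl n)]
    rw [e1 i, e1 j, key _ (Nat.mod_lt _ hnpos)]
  set d := j - i with hd
  have hdpos : 0 < d := by omega
  have hdlt : d < n := by omega
  have hper : ∀ m, c (m + d) = c m := by
    have hbig : ∀ m, i ≤ m → c (m + d) = c m := by
      intro m him
      have := key' (m - i)
      rw [show i + (m - i) = m by omega, show j + (m - i) = m + d by omega] at this
      exact this.symm
    intro m
    rcases le_or_gt i m with h | h
    · exact hbig m h
    · have := hbig (m + n) (by omega)
      rw [show m + n + d = (m + d) + n by ring, hcn, hcn] at this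
      exact this
  set g := Nat.gcd d n with hg
  have hgper : ∀ m, c (m + g) = c m := period_gcd d n hper hcn
  have hgdvd : g ∣ n := Nat.gcd_dvd_right d n
  have hgpos : 0 < g := Nat.gcd_pos_of_pos_left _ hdpos
  have hgle : g ≤ d := Nat.le_of_dvd hdpos (Nat.gcd_dvd_left d n)
  set e := n / g with he
  have hne' : n = g * e := (Nat.mul_div_cancel' hgdvd).symm
  have hcount : ∀ b : Bool, z.count b
      = e * ((Finset.range g).filter (fun m => c m = some b)).card := by
    intro b
    rw [count_eq_card_filter z b]
    have : ((Finset.range z.length).filter (fun m => z[m]? = some b)).card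
        = ((Finset.range (g*e)).filter (fun m => c m = some b)).card := by
      rw [← hne']
      congr 1
      apply Finset.filter_congr
      intro m hm
      simp only [Finset.mem_range] at hm
      simp only [hc, Nat.mod_eq_of_lt (show m < n by omega)]
    rw [this]
    exact card_filter_range_mul hgper (fun o => o = some b) e
  have hd1 : e ∣ z.count lb := ⟨_, hcount lb⟩
  have hd2 : e ∣ z.count la := ⟨_, hcount la⟩
  have : e ∣ 1 := hco ▸ Nat.dvd_gcd hd1 hd2
  have he1 : e = 1 := Nat.dvd_one.mp this
  rw [he1, mul_one] at hne'
  omega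
section
variable {α : Type*}

lemma rot_append_self (x : List α) (i : ℕ) (hi : i ≤ x.length) :
    rot (x ++ x) i = rot x i ++ rot x i := by
  rw [rot, rot, List.drop_append_of_le_length hi, List.take_append_of_le_length hi]
  set t := x.take i with ht
  set d := x.drop i with hd
  have hx : x = t ++ d := by rw [ht, hd, List.take_append_drop]
  rw [hx]
  simp [List.append_assoc]

lemma rot_sq_infix (r q : List α) (i : ℕ) (hi : i ≤ r.length) :
    rot (r ++ q) i ++ rot (r ++ q) i <:+: (r ++ q) ++ (r ++ q) ++ r := by
  set z := r ++ q with hz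
  obtain ⟨a, b, hr, ha⟩ : ∃ a b, r = a ++ b ∧ a.length = i :=
    ⟨r.take i, r.drop i, (List.take_append_drop i r).symm, by simp [List.length_take]; omega⟩
  have hrot : rot z i = (b ++ q) ++ a := by
    rw [rot, hz, hr, ← ha, List.append_assoc, List.drop_left, List.take_left]
  refine ⟨a, b, ?_⟩
  rw [hrot, hz, hr]
  simp [List.append_assoc]
end


lemma xWord_length (k : ℕ) : (xWord k).length = 4*k+8 := by
  simp [xWord, baPow_length]; ring

lemma hx1 (k : ℕ) : xWord k
    = [la] ++ baPow (k+1) ++ [la,lb] ++ ([la] ++ baPow (k+1)) := by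
  rw [xWord, show k+2 = 1+(k+1) by ring, baPow_add 1 (k+1),
    show baPow 1 = [lb,la] from rfl]
  simp

lemma hx2 (k : ℕ) : xWord k
    = ([la] ++ baPow (k+1)) ++ ([la] ++ baPow (k+1)) ++ [lb,la] := by
  rw [xWord, show k+2 = (k+1)+1 by ring, baPow_add (k+1) 1,
    show baPow 1 = [lb,la] from rfl]
  simp

lemma hx3 (k : ℕ) : xWord k
    = [la] ++ [lb,la] ++ baPow k ++ [la] ++ baPow (k+2) := by
  rw [xWord, show k+1 = 1+k by ring, baPow_add 1 k, show baPow 1 = [lb,la] from rfl]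
  simp

lemma I1 (k : ℕ) : fWord k
    = ([la] ++ baPow (k+1) ++ [la,lb])
      ++ ((([la] ++ baPow (k+1)) ++ ([la] ++ baPow (k+1))) ++ ([la] ++ baPow (k+1)))
      ++ [lb,la] := by
  rw [fWord]
  nth_rewrite 1 [hx1 k]
  rw [hx2 k]
  simp

lemma I2 (k : ℕ) : fWord k
    = ((([la] ++ baPow (k+1) ++ [la,lb]) ++ ([la] ++ baPow (k+1) ++ [la,lb]))
        ++ ([la] ++ baPow k))
      ++ ([la] ++ baPow (k+2)) := by
  rw [fWord]
  nth_rewrite 1 [hx1 k]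
  rw [hx3 k]
  simp

lemma I3a (k : ℕ) : fWord k
    = ([la] ++ baPow (k+1) ++ [la]) ++ (baPow (k+2) ++ [la] ++ baPow (k+1))
      ++ ([la] ++ baPow (k+2)) := by
  rw [fWord, xWord]
  simp

lemma I3b (k j : ℕ) (hj : j ≤ k) :
    baPow (k+2) ++ [la] ++ baPow (k+1)
    = (baPow (k+1-j) ++ [lb]) ++ (([la] ++ baPow j) ++ ([la] ++ baPow j))
      ++ baPow (k+1-j) := by
  nth_rewrite 1 [show k+2 = (k+1-j) + (j+1) by omega]
  nth_rewrite 2 [show k+1 = j + (k+1-j) by omega]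
  rw [baPow_add (k+1-j) (j+1), baPow_add j (k+1-j), baPow_succ j]
  simp

lemma IE1 (k : ℕ) : fWord k
    = ([la] ++ baPow (k+1)) ++ ([la] ++ baPow (k+2)) ++ xWord k := by
  rw [fWord]
  nth_rewrite 1 [xWord]
  simp

lemma rotsq_injOn (z : List Bool) (hco : Nat.Coprime (z.count lb) (z.count la)) :
    ∀ i j, i < z.length → j < z.length →
      rot z i ++ rot z i = rot z j ++ rot z j → i = j := by
  intro i j hi hj h
  have hz : rot z i = rot z j := (List.append_inj h (by rw [rot_length, rot_length])).1
  rcases le_total i j with hle | hle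
  · exact rot_injOn z hco i j hle hj hz
  · exact (rot_injOn z hco j i hle hi hz.symm).symm

lemma coprime_odd_add_two (m : ℕ) (hm : m % 2 = 1) : Nat.Coprime m (m+2) := by
  have h2 : Nat.gcd m (m+2) ∣ 2 := by
    have := Nat.dvd_sub (Nat.gcd_dvd_right m (m+2)) (Nat.gcd_dvd_left m (m+2))
    simpa using this
  rcases (Nat.dvd_prime Nat.prime_two).mp h2 with h | h
  · exact h
  · exfalso
    have := Nat.gcd_dvd_left m (m+2)
    rw [h] at this
    omega

lemma count_x_lb (k : ℕ) : (xWord k).count lb = 2*k+3 := by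
  rw [xWord]
  simp only [List.count_append, count_baPow_lb,
    show List.count lb [la] = 0 from rfl]
  omega

lemma count_x_la (k : ℕ) : (xWord k).count la = 2*k+5 := by
  rw [xWord]
  simp only [List.count_append, count_baPow_la,
    show List.count la [la] = 1 from rfl]
  omega

lemma mem_cyc_of_infix {k : ℕ} {s u0 : List Bool} (hu : u0 ≠ []) (hs : s = u0 ++ u0)
    (hinf : s <:+: fWord k) : s ∈ cyclicSquares (fWord k) := by
  refine ⟨⟨u0, hu, hs⟩, 0, by rw [fWord_length]; omega, ?_⟩
  simpa [rot] using hinf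

lemma ne_nil_of_len {z : List Bool} {m : ℕ} (h : z.length = m) (hm : 0 < m) : z ≠ [] := by
  intro hz
  rw [hz] at h
  simp at h
  omega

lemma memA (k i : ℕ) (hi : i ≤ 4*k+8) :
    rot (xWord k) i ++ rot (xWord k) i ∈ cyclicSquares (fWord k) := by
  have hx : i ≤ (xWord k).length := by rw [xWord_length]; omega
  refine ⟨⟨rot (xWord k) i, List.length_pos_iff.mp (by rw [rot_length, xWord_length]; omega), rfl⟩,
    i, by rw [fWord_length]; omega, ?_⟩
  rw [fWord, rot_append_self (xWord k) i hx]

lemma uuu_infix (k : ℕ) :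
    (([la] ++ baPow (k+1)) ++ ([la] ++ baPow (k+1))) ++ ([la] ++ baPow (k+1))
      <:+: fWord k :=
  ⟨[la] ++ baPow (k+1) ++ [la,lb], [lb,la], (I1 k).symm⟩

lemma memB (k i : ℕ) (hi : i ≤ 2*k+3) :
    rot ([la] ++ baPow (k+1)) i ++ rot ([la] ++ baPow (k+1)) i
      ∈ cyclicSquares (fWord k) := by
  set u := [la] ++ baPow (k+1) with hu
  have hul : u.length = 2*k+3 := by simp [hu, baPow_length]; omega
  have h1 : rot u i ++ rot u i <:+: (u ++ u) ++ u := by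
    have := rot_sq_infix u [] i (by omega)
    simpa using this
  refine mem_cyc_of_infix (List.length_pos_iff.mp (by rw [rot_length, hul]; omega)) rfl
    (h1.trans (uuu_infix k))

lemma memC (k i : ℕ) (hi : i ≤ 2*k+1) :
    rot ([la] ++ baPow (k+1) ++ [la,lb]) i ++ rot ([la] ++ baPow (k+1) ++ [la,lb]) i
      ∈ cyclicSquares (fWord k) := by
  set t := [la] ++ baPow (k+1) ++ [la,lb] with hT
  have htl : t.length = 2*k+5 := by simp [hT, baPow_length]; omega
  have heq : ([la] ++ baPow k) ++ [lb,la,la,lb] = t := by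
    rw [hT, baPow_succ' k]
    simp
  have h1 : rot t i ++ rot t i <:+: (t ++ t) ++ ([la] ++ baPow k) := by
    have := rot_sq_infix ([la] ++ baPow k) [lb,la,la,lb] i
      (by simp [baPow_length]; omega)
    rwa [heq] at this
  have h2 : (t ++ t) ++ ([la] ++ baPow k) <:+: fWord k :=
    ⟨[], [la] ++ baPow (k+2), by rw [I2 k, hT]; simp⟩
  refine mem_cyc_of_infix (List.length_pos_iff.mp (by rw [rot_length, htl]; omega)) rfl
    (h1.trans h2)

lemma memD (k j : ℕ) (hj : j ≤ k) :
    ([la] ++ baPow j) ++ ([la] ++ baPow j) ∈ cyclicSquares (fWord k) := by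
  have h1 : ([la] ++ baPow j) ++ ([la] ++ baPow j)
      <:+: baPow (k+2) ++ [la] ++ baPow (k+1) :=
    ⟨baPow (k+1-j) ++ [lb], baPow (k+1-j), by rw [I3b k j hj]⟩
  have h2 : baPow (k+2) ++ [la] ++ baPow (k+1) <:+: fWord k :=
    ⟨[la] ++ baPow (k+1) ++ [la], [la] ++ baPow (k+2), by rw [I3a k]⟩
  exact mem_cyc_of_infix (List.length_pos_iff.mp (by simp)) rfl (h1.trans h2)

lemma memE1 (k j : ℕ) (hj : 2*(j+1) ≤ k+2) :
    abPow (2*(j+1)) ∈ cyclicSquares (fWord k) := by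
  have hsplit : abPow (k+2) = abPow (2*(j+1)) ++ abPow (k+2-2*(j+1)) := by
    rw [← abPow_add]; congr 1; omega
  have h1 : abPow (2*(j+1)) <:+: abPow (k+2) :=
    ⟨[], abPow (k+2-2*(j+1)), by rw [hsplit]; simp⟩
  have h2 : abPow (k+2) <:+: [la] ++ baPow (k+2) :=
    ⟨[], [la], by rw [la_baPow]; simp⟩
  have h3 : [la] ++ baPow (k+2) <:+: fWord k :=
    ⟨[la] ++ baPow (k+1), xWord k, by rw [IE1 k]⟩
  refine mem_cyc_of_infix (s := abPow (2*(j+1))) (u0 := abPow (j+1))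
    (List.length_pos_iff.mp (by rw [abPow_length]; omega)) ?_ ((h1.trans h2).trans h3)
  rw [← abPow_add]
  congr 1
  omega

lemma memE2 (k j : ℕ) (hj : 2*(j+1) ≤ k+2) :
    baPow (2*(j+1)) ∈ cyclicSquares (fWord k) := by
  have hsplit : baPow (k+2) = baPow (2*(j+1)) ++ baPow (k+2-2*(j+1)) := by
    rw [← baPow_add]; congr 1; omega
  have h1 : baPow (2*(j+1)) <:+: baPow (k+2) :=
    ⟨[], baPow (k+2-2*(j+1)), by rw [hsplit]; simp⟩
  have h2 : baPow (k+2) <:+: fWord k :=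
    ⟨[la] ++ baPow (k+1) ++ [la], [la] ++ baPow (k+1) ++ ([la] ++ baPow (k+2)),
      by rw [I3a k]; simp⟩
  refine mem_cyc_of_infix (s := baPow (2*(j+1))) (u0 := baPow (j+1))
    (List.length_pos_iff.mp (by rw [baPow_length]; omega)) ?_ (h1.trans h2)
  rw [← baPow_add]
  congr 1
  omega

lemma abPow_head (m : ℕ) : (abPow (m+1))[0]? = some la := by rw [abPow_succ]; rfl
lemma baPow_head (m : ℕ) : (baPow (m+1))[0]? = some lb := by rw [baPow_succ]; rfl

lemma coprime_consec (m : ℕ) : Nat.Coprime m (m+1) := by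
  have h := Nat.dvd_sub (Nat.gcd_dvd_right m (m+1)) (Nat.gcd_dvd_left m (m+1))
  simp only [Nat.add_sub_cancel_left] at h
  exact Nat.dvd_one.mp h

lemma main_card (k : ℕ) : 10*k+15 ≤ (cyclicSquares (fWord k)).ncard := by
  classical
  have hfin : (cyclicSquares (fWord k)).Finite := by
    apply Set.Finite.subset (List.finite_length_le Bool (8*k+16))
    rintro s ⟨-, i, hi, hinf⟩
    have := hinf.length_le
    rw [rot_length, fWord_length] at this
    exact this
  set u : List Bool := [la] ++ baPow (k+1) with hu
  set t : List Bool := [la] ++ baPow (k+1) ++ [la,lb] with hT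
  have hxl := xWord_length k
  have hul : u.length = 2*k+3 := by simp [hu, baPow_length]; omega
  have htl : t.length = 2*k+5 := by simp [hT, baPow_length]; omega
  have hcoX : Nat.Coprime ((xWord k).count lb) ((xWord k).count la) := by
    rw [count_x_lb, count_x_la]
    have := coprime_odd_add_two (2*k+3) (by omega)
    simpa [show 2*k+3+2 = 2*k+5 by ring] using this
  have hcoU : Nat.Coprime (u.count lb) (u.count la) := by
    rw [show u.count lb = k+1 by
        rw [hu, List.count_append, count_baPow_lb, show List.count lb [la] = 0 from rfl]; omega,
      show u.count la = k+2 by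
        rw [hu, List.count_append, count_baPow_la, show List.count la [la] = 1 from rfl]; omega]
    simpa [show k+1+1 = k+2 by ring] using coprime_consec (k+1)
  have hcoT : Nat.Coprime (t.count lb) (t.count la) := by
    rw [show t.count lb = k+2 by
        rw [hT, List.count_append, List.count_append, count_baPow_lb,
          show List.count lb [la] = 0 from rfl, show List.count lb [la,lb] = 1 from rfl]; omega,
      show t.count la = k+3 by
        rw [hT, List.count_append, List.count_append, count_baPow_la,
          show List.count la [la] = 1 from rfl, show List.count la [la,lb] = 1 from rfl]; omega]
    simpa [show k+2+1 = k+3 by ring] using coprime_consec (k+2)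
  set FA : Finset (List Bool) :=
    (Finset.range (4*k+8)).image (fun i => rot (xWord k) i ++ rot (xWord k) i) with hFA
  set FB : Finset (List Bool) :=
    (Finset.range (2*k+3)).image (fun i => rot u i ++ rot u i) with hFB
  set FC : Finset (List Bool) :=
    (Finset.range (2*k+2)).image (fun i => rot t i ++ rot t i) with hFC
  set FD : Finset (List Bool) :=
    (Finset.range (k+1)).image (fun j => ([la] ++ baPow j) ++ ([la] ++ baPow j)) with hFD
  set FE1 : Finset (List Bool) :=
    (Finset.range ((k+2)/2)).image (fun j => abPow (2*(j+1))) with hFE1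
  set FE2 : Finset (List Bool) :=
    (Finset.range ((k+2)/2)).image (fun j => baPow (2*(j+1))) with hFE2
  -- cards
  have cardA : FA.card = 4*k+8 := by
    rw [hFA, Finset.card_image_of_injOn, Finset.card_range]
    intro i hi j hj h
    simp only [Finset.coe_range, Set.mem_Iio] at hi hj
    exact rotsq_injOn _ hcoX i j (by omega) (by omega) h
  have cardB : FB.card = 2*k+3 := by
    rw [hFB, Finset.card_image_of_injOn, Finset.card_range]
    intro i hi j hj h
    simp only [Finset.coe_range, Set.mem_Iio] at hi hj
    exact rotsq_injOn _ hcoU i j (by omega) (by omega) h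
  have cardC : FC.card = 2*k+2 := by
    rw [hFC, Finset.card_image_of_injOn, Finset.card_range]
    intro i hi j hj h
    simp only [Finset.coe_range, Set.mem_Iio] at hi hj
    exact rotsq_injOn _ hcoT i j (by omega) (by omega) h
  have cardD : FD.card = k+1 := by
    rw [hFD, Finset.card_image_of_injOn, Finset.card_range]
    intro i hi j hj h
    have := congrArg List.length h
    simp [baPow_length] at this
    omega
  have cardE1 : FE1.card = (k+2)/2 := by
    rw [hFE1, Finset.card_image_of_injOn, Finset.card_range]
    intro i hi j hj h
    have := congrArg List.length h
    simp [abPow_length] at this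
    omega
  have cardE2 : FE2.card = (k+2)/2 := by
    rw [hFE2, Finset.card_image_of_injOn, Finset.card_range]
    intro i hi j hj h
    have := congrArg List.length h
    simp [baPow_length] at this
    omega
  -- length facts
  have lenA : ∀ s ∈ FA, s.length = 8*k+16 := by
    intro s hs
    rw [hFA, Finset.mem_image] at hs
    obtain ⟨i, -, rfl⟩ := hs
    simp [rot_length, hxl]
    omega
  have lenB : ∀ s ∈ FB, s.length = 4*k+6 := by
    intro s hs
    rw [hFB, Finset.mem_image] at hs
    obtain ⟨i, -, rfl⟩ := hs
    simp [rot_length, hul]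
    omega
  have lenC : ∀ s ∈ FC, s.length = 4*k+10 := by
    intro s hs
    rw [hFC, Finset.mem_image] at hs
    obtain ⟨i, -, rfl⟩ := hs
    simp [rot_length, htl]
    omega
  have lenD : ∀ s ∈ FD, s.length % 4 = 2 ∧ s.length ≤ 4*k+2 := by
    intro s hs
    rw [hFD, Finset.mem_image] at hs
    obtain ⟨j, hj, rfl⟩ := hs
    simp only [Finset.mem_range] at hj
    simp [baPow_length]
    omega
  have lenE1 : ∀ s ∈ FE1, s.length % 4 = 0 ∧ s.length ≤ 2*k+4 ∧ s[0]? = some la := by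
    intro s hs
    rw [hFE1, Finset.mem_image] at hs
    obtain ⟨j, hj, rfl⟩ := hs
    simp only [Finset.mem_range] at hj
    refine ⟨by rw [abPow_length]; omega, by rw [abPow_length]; omega, ?_⟩
    rw [show 2*(j+1) = (2*j+1)+1 by ring]
    exact abPow_head _
  have lenE2 : ∀ s ∈ FE2, s.length % 4 = 0 ∧ s.length ≤ 2*k+4 ∧ s[0]? = some lb := by
    intro s hs
    rw [hFE2, Finset.mem_image] at hs
    obtain ⟨j, hj, rfl⟩ := hs
    simp only [Finset.mem_range] at hj
    refine ⟨by rw [baPow_length]; omega, by rw [baPow_length]; omega, ?_⟩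
    rw [show 2*(j+1) = (2*j+1)+1 by ring]
    exact baPow_head _
  -- union and disjointness
  set U : Finset (List Bool) := FA ∪ (FB ∪ (FC ∪ (FD ∪ (FE1 ∪ FE2)))) with hU
  have dE : Disjoint FE1 FE2 := by
    rw [Finset.disjoint_left]
    intro s h1 h2
    have e1 := (lenE1 s h1).2.2
    have e2 := (lenE2 s h2).2.2
    rw [e1] at e2
    simp [la, lb] at e2
  have dD : Disjoint FD (FE1 ∪ FE2) := by
    rw [Finset.disjoint_left]
    intro s h1 h2
    have e1 := (lenD s h1).1
    rcases Finset.mem_union.mp h2 with h | h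
    · have := (lenE1 s h).1; omega
    · have := (lenE2 s h).1; omega
  have dC : Disjoint FC (FD ∪ (FE1 ∪ FE2)) := by
    rw [Finset.disjoint_left]
    intro s h1 h2
    have e1 := lenC s h1
    rcases Finset.mem_union.mp h2 with h | h
    · have := (lenD s h).2; omega
    · rcases Finset.mem_union.mp h with h | h
      · have := (lenE1 s h).2.1; omega
      · have := (lenE2 s h).2.1; omega
  have dB : Disjoint FB (FC ∪ (FD ∪ (FE1 ∪ FE2))) := by
    rw [Finset.disjoint_left]
    intro s h1 h2
    have e1 := lenB s h1
    rcases Finset.mem_union.mp h2 with h | h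
    · have := lenC s h; omega
    · rcases Finset.mem_union.mp h with h | h
      · have := (lenD s h).2; omega
      · rcases Finset.mem_union.mp h with h | h
        · have := (lenE1 s h).2.1; omega
        · have := (lenE2 s h).2.1; omega
  have dA : Disjoint FA (FB ∪ (FC ∪ (FD ∪ (FE1 ∪ FE2)))) := by
    rw [Finset.disjoint_left]
    intro s h1 h2
    have e1 := lenA s h1
    rcases Finset.mem_union.mp h2 with h | h
    · have := lenB s h; omega
    · rcases Finset.mem_union.mp h with h | h
      · have := lenC s h; omega
      · rcases Finset.mem_union.mp h with h | h
        · have := (lenD s h).2; omega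
        · rcases Finset.mem_union.mp h with h | h
          · have := (lenE1 s h).2.1; omega
          · have := (lenE2 s h).2.1; omega
  have cardU : U.card = (4*k+8) + ((2*k+3) + ((2*k+2) + ((k+1) + ((k+2)/2 + (k+2)/2)))) := by
    rw [hU, Finset.card_union_of_disjoint dA, Finset.card_union_of_disjoint dB,
      Finset.card_union_of_disjoint dC, Finset.card_union_of_disjoint dD,
      Finset.card_union_of_disjoint dE, cardA, cardB, cardC, cardD, cardE1, cardE2]
  have hsub : ↑U ⊆ cyclicSquares (fWord k) := by
    intro s hs
    simp only [hU, Finset.coe_union, Set.mem_union, Finset.mem_coe] at hs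
    rcases hs with h | h | h | h | h | h
    · rw [hFA, Finset.mem_image] at h
      obtain ⟨i, hi, rfl⟩ := h
      simp only [Finset.mem_range] at hi
      exact memA k i (by omega)
    · rw [hFB, Finset.mem_image] at h
      obtain ⟨i, hi, rfl⟩ := h
      simp only [Finset.mem_range] at hi
      exact memB k i (by omega)
    · rw [hFC, Finset.mem_image] at h
      obtain ⟨i, hi, rfl⟩ := h
      simp only [Finset.mem_range] at hi
      exact memC k i (by omega)
    · rw [hFD, Finset.mem_image] at h
      obtain ⟨j, hj, rfl⟩ := h
      simp only [Finset.mem_range] at hj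
      exact memD k j (by omega)
    · rw [hFE1, Finset.mem_image] at h
      obtain ⟨j, hj, rfl⟩ := h
      simp only [Finset.mem_range] at hj
      exact memE1 k j (by omega)
    · rw [hFE2, Finset.mem_image] at h
      obtain ⟨j, hj, rfl⟩ := h
      simp only [Finset.mem_range] at hj
      exact memE2 k j (by omega)
  have : U.card ≤ (cyclicSquares (fWord k)).ncard := by
    rw [← Set.ncard_coe_finset]
    exact Set.ncard_le_ncard hsub hfin
  omega


/-- There is an absolute constant `C` such that for every `n₀` there is a word of
length `n ≥ n₀` whose circular word contains at least `1.25n - C` distinct squares. -/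
theorem stmt7 :
    ∃ C : ℝ, ∀ n₀ : ℕ, ∃ n : ℕ, n₀ ≤ n ∧ ∃ w : List Bool, w.length = n ∧
      1.25 * (n : ℝ) - C ≤ ((cyclicSquares w).ncard : ℝ) := by
  refine ⟨5, fun n₀ => ⟨8*n₀+16, by omega, fWord n₀, fWord_length n₀, ?_⟩⟩
  have h := main_card n₀
  have h2 : (10*n₀+15 : ℝ) ≤ ((cyclicSquares (fWord n₀)).ncard : ℝ) := by exact_mod_cast h
  push_cast
  linarith
end

section
/- For any word x and any position i of x, at most two distinct squares have their rightmost occurrence in x starting at position i. -/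
section FSAux

variable {α : Type*} {β : Type*}

private lemma prefix_get? {l₁ l₂ : List α} (h : l₁ <+: l₂) {n : ℕ} (hn : n < l₁.length) :
    l₁[n]? = l₂[n]? := by
  obtain ⟨t, rfl⟩ := h
  rw [List.getElem?_append_left hn]

private lemma period_mod {f : ℕ → β} {p n : ℕ} (hp : 1 ≤ p)
    (hf : ∀ t, t + p < n → f t = f (t + p)) : ∀ t, t < n → f t = f (t % p) := by
  intro t
  induction t using Nat.strong_induction_on with
  | _ t ih =>
    intro ht
    rcases lt_or_ge t p with h | h
    · rw [Nat.mod_eq_of_lt h]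
    · have h2 : (t - p) + p = t := by omega
      have h3 := hf (t - p) (by omega)
      rw [h2] at h3
      rw [← h3, ih _ (by omega) (by omega), Nat.mod_eq_sub_mod h]

private lemma period_sub_s8 {f : ℕ → β} {a b n : ℕ} (hab : a < b) (hn : a + b ≤ n)
    (pa : ∀ t, t + a < n → f t = f (t + a)) (pb : ∀ t, t + b < n → f t = f (t + b)) :
    ∀ t, t + (b - a) < n → f t = f (t + (b - a)) := by
  intro t ht
  rcases lt_or_ge (t + b) n with h | h
  · have h1 := pb t h
    have h2 := pa (t + (b - a)) (by omega)
    rw [show t + (b - a) + a = t + b by omega] at h2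
    rw [h1, h2]
  · have h1 := pa (t - a) (by omega)
    rw [show t - a + a = t by omega] at h1
    have h2 := pb (t - a) (by omega)
    rw [show t - a + b = t + (b - a) by omega] at h2
    rw [← h1, h2]

private lemma fw : ∀ (a b n : ℕ) (f : ℕ → β), 1 ≤ a → 1 ≤ b → a + b ≤ n →
    (∀ t, t + a < n → f t = f (t + a)) → (∀ t, t + b < n → f t = f (t + b)) →
    ∀ t, t + Nat.gcd a b < n → f t = f (t + Nat.gcd a b)
  | a, b, n, f, ha, hb, hn, pa, pb => by
    rcases Nat.lt_trichotomy a b with h | h | h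
    · have hrec := fw a (b - a) n f ha (by omega) (by omega) pa (period_sub_s8 h hn pa pb)
      rwa [Nat.gcd_sub_self_right (le_of_lt h)] at hrec
    · subst h
      simpa [Nat.gcd_self] using pa
    · have hps : ∀ t, t + (a - b) < n → f t = f (t + (a - b)) :=
        period_sub_s8 h (by omega) pb pa
      have hrec := fw (a - b) b n f (by omega) hb (by omega) hps pb
      rwa [Nat.gcd_sub_self_left (le_of_lt h)] at hrec
  termination_by a b => a + b
  decreasing_by
  · omega
  · omega

private lemma occursAt_iff {s x : List α} {i : ℕ} :
    occursAt s x i ↔ s <+: x.drop i := by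
  unfold occursAt
  rw [List.prefix_iff_eq_take]
  exact eq_comm

private lemma occursAt_shift {s t x : List α} {i j : ℕ}
    (ht : occursAt t x i) (hst : s <+: t.drop j) : occursAt s x (i + j) := by
  rw [occursAt_iff] at ht ⊢
  refine hst.trans ?_
  obtain ⟨r, hr⟩ := ht
  rw [← List.drop_drop, ← hr]
  rcases le_or_gt j t.length with h | h
  · rw [List.drop_append_of_le_length h]
    exact List.prefix_append _ _
  · rw [List.drop_eq_nil_of_le (le_of_lt h)]
    exact List.nil_prefix

/-- The core combinatorial lemma: if `u²` is a prefix of `v²`, `v²` of `w²`,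
with `|u| < |v| < |w| < 2|u|`, then `u²` occurs again inside `v²` at offset `|v|-|u|`. -/
private lemma core {u v w : List α} (hu : 1 ≤ u.length)
    (hUV : u.length < v.length) (hVW : v.length < w.length)
    (hW2U : w.length < 2 * u.length)
    (huv : (u ++ u) <+: (v ++ v)) (hvw : (v ++ v) <+: (w ++ w)) :
    (u ++ u) <+: ((v ++ v).drop (v.length - u.length)) := by
  set U := u.length with hU
  set V := v.length with hV
  set W := w.length with hW
  set q1 := V - U with hq1
  set q3 := W - V with hq3
  have hq1p : 1 ≤ q1 := by omega
  have hq3p : 1 ≤ q3 := by omega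
  have hq13 : q1 + q3 ≤ U := by omega
  have luu : (u ++ u).length = U + U := by simp [List.length_append]; omega
  have lvv : (v ++ v).length = V + V := by simp [List.length_append]; omega
  have fuv : ∀ t, t < U + U → (u ++ u)[t]? = (v ++ v)[t]? := by
    intro t ht
    exact prefix_get? huv (by rw [luu]; omega)
  have fvw : ∀ t, t < V + V → (v ++ v)[t]? = (w ++ w)[t]? := by
    intro t ht
    exact prefix_get? hvw (by rw [lvv]; omega)
  have huvp : ∀ t, t < U → u[t]? = v[t]? := by
    intro t ht
    have h := fuv t (by omega)
    rwa [List.getElem?_append_left (show t < u.length by omega),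
      List.getElem?_append_left (show t < v.length by omega)] at h
  have hvwp : ∀ t, t < V → v[t]? = w[t]? := by
    intro t ht
    have h := fvw t (by omega)
    rwa [List.getElem?_append_left (show t < v.length by omega),
      List.getElem?_append_left (show t < w.length by omega)] at h
  have E : ∀ j, j < q1 → v[(U + j)]? = u[j]? := by
    intro j hj
    have h := fuv (U + j) (by omega)
    rw [List.getElem?_append_right (show u.length ≤ U + j by omega),
      List.getElem?_append_left (show U + j < v.length by omega)] at h
    rw [show U + j - u.length = j by omega] at h
    exact h.symm
  have P1 : ∀ t, t + q1 < U → u[t]? = u[(t + q1)]? := by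
    intro t ht
    have h := fuv (V + t) (by omega)
    rw [List.getElem?_append_right (show u.length ≤ V + t by omega),
      List.getElem?_append_right (show v.length ≤ V + t by omega)] at h
    rw [show V + t - u.length = t + q1 by omega, show V + t - v.length = t by omega] at h
    rw [huvp t (by omega)]
    exact h.symm
  have P3 : ∀ t, t + q3 < V → v[t]? = v[(t + q3)]? := by
    intro t ht
    have h := fvw (W + t) (by omega)
    rw [List.getElem?_append_right (show v.length ≤ W + t by omega),
      List.getElem?_append_right (show w.length ≤ W + t by omega)] at h
    rw [show W + t - v.length = t + q3 by omega, show W + t - w.length = t by omega] at h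
    rw [hvwp t (by omega)]
    exact h.symm
  have P3u : ∀ t, t + q3 < U → u[t]? = u[(t + q3)]? := by
    intro t ht
    rw [huvp t (by omega), huvp (t + q3) (by omega)]
    exact P3 t (by omega)
  set d0 := Nat.gcd q1 q3 with hd0
  have hd0q1 : d0 ∣ q1 := Nat.gcd_dvd_left _ _
  have hd0q3 : d0 ∣ q3 := Nat.gcd_dvd_right _ _
  have hd0p : 1 ≤ d0 := by
    rcases Nat.eq_zero_or_pos d0 with h | h
    · rw [h] at hd0q1
      omega
    · omega
  have hd0q1' : d0 ≤ q1 := Nat.le_of_dvd (by omega) hd0q1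
  have hd0q3' : d0 ≤ q3 := Nat.le_of_dvd (by omega) hd0q3
  have Pd0 : ∀ t, t + d0 < U → u[t]? = u[(t + d0)]? :=
    fw q1 q3 U (fun n => u[n]?) hq1p hq3p hq13 P1 P3u
  have Md0 : ∀ t, t < U → u[t]? = u[(t % d0)]? := period_mod hd0p Pd0
  have S6 : ∀ j, j < d0 → u[((U % d0 + j) % d0)]? = u[j]? := by
    intro j hj
    have h1 : v[(U - q3 + j)]? = v[(U + j)]? := by
      have h := P3 (U - q3 + j) (by omega)
      rwa [show U - q3 + j + q3 = U + j by omega] at h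
    have h2 : u[(U - q3 + j)]? = v[(U - q3 + j)]? := huvp _ (by omega)
    have h3 : u[(U - q3 + j)]? = u[((U - q3 + j) % d0)]? := Md0 _ (by omega)
    obtain ⟨k, hk⟩ := hd0q3
    have h4 : (U - q3 + j) % d0 = (U % d0 + j) % d0 := by
      have e2 : (U + j) % d0 = (U - q3 + j) % d0 := by
        rw [show U + j = (U - q3 + j) + d0 * k by omega, Nat.add_mul_mod_self_left]
      rw [← e2, Nat.add_mod U j d0, Nat.mod_eq_of_lt hj]
    rw [← h4, ← h3, h2, h1]
    exact E j (by omega)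
  set ρ := U % d0 with hρ
  set d := Nat.gcd ρ d0 with hd
  have hdρ : d ∣ ρ := Nat.gcd_dvd_left _ _
  have hdd0 : d ∣ d0 := Nat.gcd_dvd_right _ _
  have hdp : 1 ≤ d := by
    rcases Nat.eq_zero_or_pos d with h | h
    · rw [h] at hdd0
      omega
    · omega
  have hdU : d ∣ U := by
    have h5 := Nat.div_add_mod U d0
    have : d ∣ d0 * (U / d0) + U % d0 := Dvd.dvd.add (hdd0.mul_right _) hdρ
    rwa [h5] at this
  have hdq1 : d ∣ q1 := hdd0.trans hd0q1
  have YP : ∀ t, u[(t % d0)]? = u[((t + d) % d0)]? := by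
    by_cases h0 : ρ = 0
    · have hdd : d = d0 := by rw [hd, h0, Nat.gcd_zero_left]
      intro t
      rw [hdd, Nat.add_mod_right]
    · have hρp : 1 ≤ ρ := by omega
      have hρlt : ρ < d0 := by rw [hρ]; exact Nat.mod_lt _ (by omega)
      have PYρ : ∀ t, u[(t % d0)]? = u[((t + ρ) % d0)]? := by
        intro t
        have e : (t + ρ) % d0 = (ρ + t % d0) % d0 := by
          rw [Nat.add_mod t ρ d0, Nat.mod_eq_of_lt hρlt, Nat.add_comm]
        rw [e]
        exact (S6 (t % d0) (Nat.mod_lt _ (by omega))).symm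
      have PYd0 : ∀ t, u[(t % d0)]? = u[((t + d0) % d0)]? := by
        intro t
        rw [Nat.add_mod_right]
      intro t
      exact fw ρ d0 (t + d + ρ + d0 + 1) (fun s => u[s % d0]?) hρp hd0p (by omega)
        (fun s _ => PYρ s) (fun s _ => PYd0 s) t (by omega)
  have Pd : ∀ t, t + d < U → u[t]? = u[(t + d)]? := by
    intro t ht
    rw [Md0 t (by omega), Md0 (t + d) (by omega)]
    exact YP t
  have Md : ∀ t, t < U → u[t]? = u[(t % d)]? := period_mod hdp Pd
  have Cd : ∀ t1 t2, t1 < U → t2 < U → t1 % d = t2 % d → u[t1]? = u[t2]? := by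
    intro t1 t2 h1 h2 h3
    rw [Md t1 h1, Md t2 h2, h3]
  -- final computation
  have main : ∀ n : ℕ, (u ++ u)[n]? = (((v ++ v).drop q1).take (U + U))[n]? := by
    intro n
    rcases lt_or_ge n (U + U) with hn | hn
    · rw [List.getElem?_take_of_lt hn, List.getElem?_drop]
      rcases lt_or_ge n U with h1 | h1
      · rw [List.getElem?_append_left (show n < u.length by omega),
          List.getElem?_append_left (show q1 + n < v.length by omega)]
        rcases lt_or_ge (q1 + n) U with h2 | h2
        · rw [← huvp (q1 + n) (by omega), show q1 + n = n + q1 by omega]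
          exact P1 n (by omega)
        · have hE := E (q1 + n - U) (by omega)
          rw [show U + (q1 + n - U) = q1 + n by omega] at hE
          rw [hE]
          obtain ⟨k, hk⟩ : d ∣ (U - q1) := Nat.dvd_sub hdU hdq1
          refine Cd n (q1 + n - U) (by omega) (by omega) ?_
          conv_lhs => rw [show n = (q1 + n - U) + d * k by omega]
          rw [Nat.add_mul_mod_self_left]
      · rw [List.getElem?_append_right (show u.length ≤ n by omega),
          List.getElem?_append_right (show v.length ≤ q1 + n by omega)]
        rw [show q1 + n - v.length = n - U by omega, show n - u.length = n - U by omega]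
        exact huvp (n - U) (by omega)
    · rw [List.getElem?_eq_none (by omega : (u ++ u).length ≤ n),
        List.getElem?_eq_none (le_trans (List.length_take_le _ _) hn)]
  rw [List.prefix_iff_eq_take, luu]
  exact List.ext_getElem? main

private lemma pairNot {u v x : List α} {i : ℕ} (hu : 1 ≤ u.length)
    (hru : rightmostStartsAt (u ++ u) x i) (hv : occursAt (v ++ v) x i)
    (h2 : 2 * u.length ≤ v.length) : False := by
  have huv2 : (u ++ u) <+: (v ++ v) :=
    List.prefix_of_prefix_length_le (occursAt_iff.1 hru.1) (occursAt_iff.1 hv)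
      (by simp only [List.length_append]; omega)
  have huv : (u ++ u) <+: v :=
    List.prefix_of_prefix_length_le huv2 (List.prefix_append v v)
      (by simp only [List.length_append]; omega)
  have hocc : occursAt (u ++ u) x (i + v.length) := by
    refine occursAt_shift hv ?_
    rw [List.drop_left]
    exact huv
  have := hru.2 _ hocc
  omega

private lemma keyFS {u v w x : List α} {i : ℕ} (hu : 1 ≤ u.length)
    (hUV : u.length < v.length) (hVW : v.length < w.length)
    (hru : rightmostStartsAt (u ++ u) x i)
    (hv : occursAt (v ++ v) x i) (hw : occursAt (w ++ w) x i) : False := by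
  have hW2U : w.length < 2 * u.length := by
    by_contra h
    exact pairNot hu hru hw (by omega)
  have huv : (u ++ u) <+: (v ++ v) :=
    List.prefix_of_prefix_length_le (occursAt_iff.1 hru.1) (occursAt_iff.1 hv)
      (by simp only [List.length_append]; omega)
  have hvw : (v ++ v) <+: (w ++ w) :=
    List.prefix_of_prefix_length_le (occursAt_iff.1 hv) (occursAt_iff.1 hw)
      (by simp only [List.length_append]; omega)
  have hc := core hu hUV hVW hW2U huv hvw
  have hocc : occursAt (u ++ u) x (i + (v.length - u.length)) := occursAt_shift hv hc
  have := hru.2 _ hocc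
  omega

end FSAux

/-- At most two distinct squares have their rightmost occurrence in `x` starting at `i`. -/
theorem stmt8 {α : Type*} (x : List α) (i : ℕ) :
    {s | IsSq s ∧ rightmostStartsAt s x i}.ncard ≤ 2 := by
  by_contra hcon
  push_neg at hcon
  have hfin : {s | IsSq s ∧ rightmostStartsAt s x i}.Finite := by
    by_contra hinf
    rw [← Set.not_infinite, not_not] at hinf
    rw [hinf.ncard] at hcon
    omega
  obtain ⟨a, b, c, ha, hb, hc, hab, hac, hbc⟩ := (Set.two_lt_ncard_iff hfin).1 hcon
  obtain ⟨⟨ua, hua0, rfl⟩, hra⟩ := ha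
  obtain ⟨⟨ub, hub0, rfl⟩, hrb⟩ := hb
  obtain ⟨⟨uc, huc0, rfl⟩, hrc⟩ := hc
  have hpa : 1 ≤ ua.length := List.length_pos_iff.2 hua0
  have hpb : 1 ≤ ub.length := List.length_pos_iff.2 hub0
  have hpc : 1 ≤ uc.length := List.length_pos_iff.2 huc0
  have hdist : ∀ (p q : List α), occursAt (p ++ p) x i → occursAt (q ++ q) x i →
      p.length = q.length → p ++ p = q ++ q := by
    intro p q hp hq h
    unfold occursAt at hp hq
    rw [← hp, ← hq]
    congr 1
    simp only [List.length_append]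
    omega
  have hlab : ua.length ≠ ub.length := fun h => hab (hdist _ _ hra.1 hrb.1 h)
  have hlac : ua.length ≠ uc.length := fun h => hac (hdist _ _ hra.1 hrc.1 h)
  have hlbc : ub.length ≠ uc.length := fun h => hbc (hdist _ _ hrb.1 hrc.1 h)
  rcases Nat.lt_trichotomy ua.length ub.length with h1 | h1 | h1
  · rcases Nat.lt_trichotomy ub.length uc.length with h2 | h2 | h2
    · exact keyFS hpa h1 h2 hra hrb.1 hrc.1
    · exact hlbc h2
    · rcases Nat.lt_trichotomy ua.length uc.length with h3 | h3 | h3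
      · exact keyFS hpa h3 h2 hra hrc.1 hrb.1
      · exact hlac h3
      · exact keyFS hpc h3 h1 hrc hra.1 hrb.1
  · exact hlab h1
  · rcases Nat.lt_trichotomy ua.length uc.length with h2 | h2 | h2
    · exact keyFS hpb h1 h2 hrb hra.1 hrc.1
    · exact hlac h2
    · rcases Nat.lt_trichotomy ub.length uc.length with h3 | h3 | h3
      · exact keyFS hpb h3 h2 hrb hrc.1 hra.1
      · exact hlbc h3
      · exact keyFS hpc h3 h1 hrc hrb.1 hra.1
end

section
/- The number of distinct squares occurring as factors of a word of length n is at most 2n. -/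
namespace FSaux

variable {β : Type*} {α : Type*}

/-- `p` is a period of the length-`m` prefix of `f`. -/
def Per (f : ℕ → β) (m p : ℕ) : Prop := ∀ t, t + p < m → f (t + p) = f t

lemma per_sub {f : ℕ → β} {m p q : ℕ} (hp : 0 < p) (hpq : p < q) (hm : p + q ≤ m)
    (Hp : Per f m p) (Hq : Per f m q) : Per f m (q - p) := by
  intro t ht
  by_cases h : t + q < m
  · have h1 := Hq t h
    have h2 := Hp (t + q - p) (by omega)
    have e1 : t + q - p + p = t + q := by omega
    rw [e1] at h2
    have e2 : t + q - p = t + (q - p) := by omega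
    rw [e2] at h2
    exact h2.symm.trans h1
  · have h1 := Hp (t - p) (by omega)
    have e1 : t - p + p = t := by omega
    rw [e1] at h1
    have h2 := Hq (t - p) (by omega)
    have e2 : t - p + q = t + (q - p) := by omega
    rw [e2] at h2
    exact h2.trans h1.symm

lemma fw {f : ℕ → β} {m : ℕ} (n p q : ℕ) (hn : p + q ≤ n) (hp : 0 < p) (hq : 0 < q)
    (hm : p + q ≤ m) (Hp : Per f m p) (Hq : Per f m q) : Per f m (Nat.gcd p q) := by
  induction n generalizing p q with
  | zero => omega
  | succ n ih =>
    rcases lt_trichotomy p q with h | h | h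
    · have hsub := per_sub hp h hm Hp Hq
      have hg : Nat.gcd p q = Nat.gcd p (q - p) := (Nat.gcd_sub_self_right h.le).symm
      rw [hg]
      exact ih p (q - p) (by omega) hp (by omega) (by omega) Hp hsub
    · rw [h, Nat.gcd_self]; exact Hq
    · have hsub := per_sub hq h (by omega) Hq Hp
      have hg : Nat.gcd p q = Nat.gcd (p - q) q := by
        rw [Nat.gcd_comm, Nat.gcd_comm (p - q) q]
        exact (Nat.gcd_sub_self_right h.le).symm
      rw [hg]
      exact ih (p - q) q (by omega) (by omega) hq (by omega) hsub Hq

lemma struct_ext {f : ℕ → β} {e q L : ℕ} (he : 0 < e) (hq : 0 < q) (hdvd : e ∣ q)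
    (base : ∀ t, t < q → f t = f (t % e)) (hper : Per f L q) :
    ∀ t, t < L → f t = f (t % e) := by
  intro t
  induction t using Nat.strong_induction_on with
  | _ t ih =>
    intro ht
    by_cases h : t < q
    · exact base t h
    · push_neg at h
      have h1 : f (t - q + q) = f (t - q) := hper (t - q) (by omega)
      have e1 : t - q + q = t := by omega
      rw [e1] at h1
      have h2 := ih (t - q) (by omega) (by omega)
      have e2 : (t - q) % e = t % e := by
        obtain ⟨k, hk⟩ := hdvd
        conv_rhs => rw [show t = (t - q) + e * k by omega]
        rw [Nat.add_mul_mod_self_left]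
      rw [h2, e2] at h1
      exact h1
  
lemma key {f : ℕ → β} {a b c : ℕ} (ha : 0 < a) (hab : a < b) (hbc : b < c)
    (pa : ∀ t, t < a → f (t + a) = f t)
    (pb : ∀ t, t < b → f (t + b) = f t)
    (pc : ∀ t, t < c → f (t + c) = f t) :
    ∃ j, 0 < j ∧ j + 2 * a ≤ 2 * c ∧ ∀ t, t < 2 * a → f (j + t) = f t := by
  classical
  by_cases h2 : 2 * a ≤ c
  · refine ⟨c, by omega, by omega, fun t ht => ?_⟩
    have h := pc t (by omega)
    rwa [Nat.add_comm] at h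
  · push_neg at h2
    set p := b - a with hp'
    set q := c - b with hq'
    have hp : 0 < p := by omega
    have hq : 0 < q := by omega
    have hpq : p + q < a := by omega
    have Hup : Per f a p := by
      intro j hj
      have h1 := pa (j + p) (by omega)
      have h3 := pb j (by omega)
      have e1 : j + p + a = j + b := by omega
      rw [e1] at h1
      exact h1.symm.trans h3
    have Huq : Per f a q := by
      intro j hj
      have h1 := pc j (by omega)
      have h3 := pb (j + q) (by omega)
      have e1 : j + q + b = j + c := by omega
      rw [e1] at h3
      exact h3.symm.trans h1
    have hPex : ∃ k, 0 < k ∧ Per f a k := ⟨a, ha, fun t ht => absurd ht (by omega)⟩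
    set e := Nat.find hPex with he'
    obtain ⟨hepos, Hue⟩ : 0 < e ∧ Per f a e := Nat.find_spec hPex
    have hmin : ∀ k, 0 < k → Per f a k → e ≤ k := fun k h1 h3 => Nat.find_min' hPex ⟨h1, h3⟩
    have hgcd : Per f a (Nat.gcd p q) := fw (p + q) p q le_rfl hp hq (by omega) Hup Huq
    have heg : e ≤ Nat.gcd p q := hmin _ (Nat.gcd_pos_of_pos_left _ hp) hgcd
    have hep : e ≤ p := le_trans heg (Nat.gcd_le_left _ hp)
    have heq : e ≤ q := le_trans heg (Nat.gcd_le_right _ hq)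
    have hdp : e ∣ p := by
      have h := fw (e + p) e p le_rfl hepos hp (by omega) Hue Hup
      have h3 : e ≤ Nat.gcd e p := hmin _ (Nat.gcd_pos_of_pos_left _ hepos) h
      have h4 : Nat.gcd e p ≤ e := Nat.gcd_le_left _ hepos
      have h5 : Nat.gcd e p = e := le_antisymm h4 h3
      exact h5 ▸ Nat.gcd_dvd_right e p
    have hdq : e ∣ q := by
      have h := fw (e + q) e q le_rfl hepos hq (by omega) Hue Huq
      have h3 : e ≤ Nat.gcd e q := hmin _ (Nat.gcd_pos_of_pos_left _ hepos) h
      have h4 : Nat.gcd e q ≤ e := Nat.gcd_le_left _ hepos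
      have h5 : Nat.gcd e q = e := le_antisymm h4 h3
      exact h5 ▸ Nat.gcd_dvd_right e q
    have structU : ∀ t, t < a → f t = f (t % e) :=
      struct_ext hepos hepos dvd_rfl (fun t ht => by rw [Nat.mod_eq_of_lt ht]) Hue
    have HVq : Per f b q := by
      intro j hj
      have h1 := pc j (by omega)
      have h3 := pb (j + q) (by omega)
      have e1 : j + q + b = j + c := by omega
      rw [e1] at h3
      exact h3.symm.trans h1
    have structV : ∀ t, t < b → f t = f (t % e) :=
      struct_ext hepos hq hdq (fun t ht => structU t (by omega)) HVq
    have hda : e ∣ a := by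
      by_contra hnd
      have hs : 0 < a % e := by
        rcases Nat.eq_zero_or_pos (a % e) with h | h
        · exact absurd (Nat.dvd_of_mod_eq_zero h) hnd
        · exact h
      have hse : a % e < e := Nat.mod_lt _ hepos
      have hrot : ∀ m, m < e → f m = f ((a + m) % e) := by
        intro m hm
        have h1 := pa m (by omega)
        have h3 := structV (m + a) (by omega)
        have h4 := h1.symm.trans h3
        rwa [Nat.add_comm m a] at h4
      have Hs : Per f a (a % e) := by
        intro j hj
        have h1 := structU (j + a % e) (by omega)
        have h3 := structU j (by omega)
        have h4 := hrot (j % e) (Nat.mod_lt _ hepos)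
        have e1 : (a + j % e) % e = (j + a % e) % e := by
          conv_lhs => rw [Nat.add_mod]
          conv_rhs => rw [Nat.add_mod]
          rw [Nat.mod_mod_of_dvd j (dvd_refl e), Nat.mod_mod_of_dvd a (dvd_refl e),
            Nat.add_comm (a % e) (j % e)]
        rw [h1, ← e1, ← h4, ← h3]
      have := hmin (a % e) hs Hs
      omega
    have hdb : e ∣ b := by
      have hb : b = a + p := by omega
      rw [hb]; exact dvd_add hda hdp
    have hdc : e ∣ c := by
      have hc : c = b + q := by omega
      rw [hc]; exact dvd_add hdb hdq
    have HWb : Per f c b := fun j hj => pb j (by omega)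
    have structW : ∀ t, t < c → f t = f (t % e) :=
      struct_ext hepos (by omega) hdb (fun t ht => structV t (by omega)) HWb
    have HYc : Per f (2 * c) c := fun j hj => pc j (by omega)
    have structY : ∀ t, t < 2 * c → f t = f (t % e) :=
      struct_ext hepos (by omega) hdc (fun t ht => structW t (by omega)) HYc
    refine ⟨e, hepos, by omega, fun t ht => ?_⟩
    have h1 := structY (e + t) (by omega)
    have h3 := structY t (by omega)
    rw [h1, h3, Nat.add_mod_left]

end FSaux

namespace FSaux

lemma occursAt_length {α : Type*} {s x : List α} {i : ℕ} (hs : s ≠ []) (h : occursAt s x i) :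
    i + s.length ≤ x.length := by
  unfold occursAt at h
  have hl := congrArg List.length h
  simp only [List.length_take, List.length_drop] at hl
  have hs' : 0 < s.length := List.length_pos_iff.mpr hs
  omega

lemma occursAt_get {α : Type*} {s x : List α} {i : ℕ} (h : occursAt s x i) :
    ∀ t, t < s.length → x[i + t]? = s[t]? := by
  intro t ht
  conv_rhs => rw [← h]
  rw [List.getElem?_take_of_lt ht, List.getElem?_drop]

lemma occursAt_of_get {α : Type*} {s x : List α} {i : ℕ} (hlen : i + s.length ≤ x.length)
    (h : ∀ t, t < s.length → x[i + t]? = s[t]?) : occursAt s x i := by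
  apply List.ext_getElem?
  intro m
  by_cases hm : m < s.length
  · rw [List.getElem?_take_of_lt hm, List.getElem?_drop]
    exact h m hm
  · push_neg at hm
    rw [List.getElem?_eq_none_iff.mpr (le_trans (List.length_take_le _ _) hm),
      List.getElem?_eq_none_iff.mpr hm]

lemma infix_iff_occursAt {α : Type*} {s x : List α} : s <:+: x ↔ ∃ i, occursAt s x i := by
  constructor
  · rintro ⟨t, u, rfl⟩
    refine ⟨t.length, ?_⟩
    unfold occursAt
    rw [List.append_assoc, List.drop_left, List.take_left]
  · rintro ⟨i, h⟩
    rw [← h]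
    exact ((List.take_prefix _ _).isInfix).trans ((List.drop_suffix _ _).isInfix)

lemma three {α : Type*} {x s₁ s₂ s₃ : List α} {i : ℕ}
    (h1 : IsSq s₁) (h2 : IsSq s₂) (h3 : IsSq s₃)
    (o1 : occursAt s₁ x i) (o2 : occursAt s₂ x i) (o3 : occursAt s₃ x i)
    (l12 : s₁.length < s₂.length) (l23 : s₂.length < s₃.length)
    (hmax : ∀ j, occursAt s₁ x j → j ≤ i) : False := by
  obtain ⟨u, hu, rfl⟩ := h1
  obtain ⟨v, hv, rfl⟩ := h2
  obtain ⟨w, hw, rfl⟩ := h3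
  have lu : (u ++ u).length = u.length + u.length := by simp
  have lv : (v ++ v).length = v.length + v.length := by simp
  have lw : (w ++ w).length = w.length + w.length := by simp
  have ha : 0 < u.length := List.length_pos_iff.mpr hu
  set f : ℕ → Option α := fun m => x[i + m]? with hf
  have per : ∀ (y : List α), occursAt (y ++ y) x i →
      ∀ t, t < y.length → f (t + y.length) = f t := by
    intro y ho t ht
    have hly : (y ++ y).length = y.length + y.length := by simp
    have g1 := occursAt_get ho (t + y.length) (by omega)
    have g2 := occursAt_get ho t (by omega)
    have gy : (y ++ y)[t + y.length]? = (y ++ y)[t]? := by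
      rw [List.getElem?_append_right (by omega), List.getElem?_append_left ht, Nat.add_sub_cancel]
    rw [gy] at g1
    exact g1.trans g2.symm
  obtain ⟨j, hj0, hjle, hj⟩ := key ha (by omega) (by omega)
    (per u o1) (per v o2) (per w o3)
  have hocc : occursAt (u ++ u) x (i + j) := by
    apply occursAt_of_get
    · have h := occursAt_length (by simp [hw]) o3
      omega
    · intro t ht
      have e1 : i + j + t = i + (j + t) := by omega
      rw [e1]
      calc x[i + (j + t)]? = f (j + t) := rfl
        _ = f t := hj t (by omega)
        _ = x[i + t]? := rfl
        _ = (u ++ u)[t]? := occursAt_get o1 t ht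
  have := hmax (i + j) hocc
  omega

end FSaux

/-- A word of length `n` contains at most `2n` distinct squares. -/
theorem stmt9 {α : Type*} (x : List α) :
    {s | IsSq s ∧ s <:+: x}.ncard ≤ 2 * x.length := by
  classical
  set n := x.length with hn
  set S : Set (List α) := {s | IsSq s ∧ s <:+: x} with hS
  have hfin : S.Finite := by
    apply Set.Finite.subset x.sublists.toFinset.finite_toSet
    intro s hs
    rw [Finset.mem_coe, List.mem_toFinset, List.mem_sublists]
    exact hs.2.sublist
  let R : List α → ℕ := fun s => Nat.findGreatest (fun i => occursAt s x i) n
  have hne : ∀ s ∈ S, s ≠ [] := by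
    rintro s ⟨⟨u, hu, rfl⟩, -⟩ h
    exact hu (List.append_eq_nil_iff.mp h).1
  have hocc : ∀ s ∈ S, occursAt s x (R s) := by
    intro s hs
    obtain ⟨i, hi⟩ := FSaux.infix_iff_occursAt.mp hs.2
    have hib : i ≤ n := by
      have := FSaux.occursAt_length (hne s hs) hi
      omega
    exact Nat.findGreatest_spec hib hi
  have hmax : ∀ s ∈ S, ∀ j, occursAt s x j → j ≤ R s := by
    intro s hs j hj
    have hjb : j ≤ n := by
      have := FSaux.occursAt_length (hne s hs) hj
      omega
    exact Nat.le_findGreatest hjb hj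
  let C : List α → Prop := fun s => ∃ r, (IsSq r ∧ r <:+: x) ∧ R r = R s ∧ r.length < s.length
  let φ : List α → ℕ × Bool := fun s => (R s, if C s then true else false)
  have aux : ∀ s ∈ S, ∀ t ∈ S, φ s = φ t → s.length < t.length → False := by
    intro s hs t ht hφ hlt
    have hR : R s = R t := congrArg Prod.fst hφ
    have hsnd : (if C s then true else false) = (if C t then true else false) :=
      congrArg Prod.snd hφ
    have hCt : C t := ⟨s, hs, hR, hlt⟩
    rw [if_pos hCt] at hsnd
    have hCs : C s := by
      by_contra hcon
      rw [if_neg hcon] at hsnd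
      exact Bool.noConfusion hsnd
    obtain ⟨r, hr, hRr, hlr⟩ := hCs
    have or_ : occursAt r x (R s) := by
      have := hocc r hr
      rwa [hRr] at this
    have os_ : occursAt s x (R s) := hocc s hs
    have ot_ : occursAt t x (R s) := by
      have := hocc t ht
      rwa [← hR] at this
    exact FSaux.three hr.1 hs.1 ht.1 or_ os_ ot_ hlr hlt
      (fun j hj => hRr ▸ hmax r hr j hj)
  have hinj : Set.InjOn φ S := by
    intro s hs t ht hφ
    rcases Nat.lt_trichotomy s.length t.length with h | h | h
    · exact (aux s hs t ht hφ h).elim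
    · have hR : R s = R t := congrArg Prod.fst hφ
      have o1 := hocc s hs
      have o2 := hocc t ht
      unfold occursAt at o1 o2
      rw [hR, h] at o1
      exact o1.symm.trans o2
    · exact (aux t ht s hs hφ.symm h).elim
  have himg : φ '' S ⊆ ↑((Finset.range n) ×ˢ (Finset.univ : Finset Bool)) := by
    rintro _ ⟨s, hs, rfl⟩
    simp only [Finset.coe_product, Set.mem_prod, Finset.mem_coe, Finset.mem_range,
      Finset.mem_univ, and_true]
    have h1 := FSaux.occursAt_length (hne s hs) (hocc s hs)
    have h2 : 0 < s.length := List.length_pos_iff.mpr (hne s hs)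
    change R s < n
    omega
  calc S.ncard = (φ '' S).ncard := (Set.ncard_image_of_injOn hinj).symm
    _ ≤ (↑((Finset.range n) ×ˢ (Finset.univ : Finset Bool)) : Set (ℕ × Bool)).ncard :=
        Set.ncard_le_ncard himg (Finset.finite_toSet _)
    _ = 2 * n := by
        rw [Set.ncard_coe_finset, Finset.card_product, Finset.card_range, Finset.card_univ,
          Fintype.card_bool]
        omega
end

section
/- Let w be a word of length n such that the factor w[n/4..n/2] is aperiodic (its smallest period exceeds its half-length). Then all rightmost occurrences of distinct squares of length at most n in ww that start at a position i with 1 ≤ i ≤ n/4 correspond to squares of the same length. -/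
lemma get?_of_occursAt {α : Type*} {s x : List α} {i t : ℕ} (h : occursAt s x i)
    (ht : t < s.length) : x[i + t]? = s[t]? := by
  conv_rhs => rw [← h]
  rw [List.getElem?_take_of_lt ht, List.getElem?_drop]

lemma sq_get {α : Type*} {u x : List α} {i t : ℕ} (h : occursAt (u ++ u) x i)
    (ht : t < u.length) : x[i + t]? = x[i + u.length + t]? := by
  have h1 : x[i + t]? = (u ++ u)[t]? :=
    get?_of_occursAt h (by simp; omega)
  have h2 : x[i + (u.length + t)]? = (u ++ u)[u.length + t]? :=
    get?_of_occursAt h (by simp; omega)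
  rw [h1, show i + u.length + t = i + (u.length + t) by omega, h2,
    List.getElem?_append_left ht, List.getElem?_append_right (by omega)]
  simp

/-- key arithmetic fact: rightmost occurrence of a square of length ≤ n starting
at i must wrap: i + |u++u| > n. -/
lemma wraps {α : Type*} {w u : List α} {n i : ℕ} (hn : w.length = n)
    (hl : 2 * u.length ≤ n) (hi : i < n / 4)
    (h : rightmostStartsAt (u ++ u) (w ++ w) i) : n + 1 ≤ i + 2 * u.length := by
  by_contra hc
  push_neg at hc
  have h1 := h.1
  have hocc : occursAt (u ++ u) (w ++ w) (n + i) := by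
    unfold occursAt at h1 ⊢
    have hd : (w ++ w).drop (n + i) = w.drop i := by
      rw [show n + i = w.length + i by omega, List.drop_append]
      simp
    rw [hd]
    have hd2 : (w ++ w).drop i = w.drop i ++ w :=
      List.drop_append_of_le_length (by omega)
    rw [hd2, List.take_append_of_le_length (by simp; omega)] at h1
    exact h1
  have := h.2 (n + i) hocc
  omega

lemma key {α : Type*} (w : List α) (n : ℕ) (hn : w.length = n)
    (hs : Aperiodic (oneSlice w (n / 4) (n / 2)))
    (u u' : List α) (i i' : ℕ)
    (hl : 2 * u.length ≤ n) (hl' : 2 * u'.length ≤ n)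
    (hi : i < n / 4) (hi' : i' < n / 4)
    (h : rightmostStartsAt (u ++ u) (w ++ w) i)
    (h' : rightmostStartsAt (u' ++ u') (w ++ w) i')
    (hlt : u.length < u'.length) : False := by
  set q := n / 4 with hq
  set m := n / 2 with hm
  set L := u.length with hL
  set L' := u'.length with hL'
  have hq1 : 1 ≤ q := by omega
  have hqm : 2 * q ≤ m ∧ 2 * m ≤ n ∧ 4 * q ≤ n := by
    constructor
    · omega
    constructor <;> omega
  have hw1 : i + 2 * L ≥ n + 1 := wraps hn hl hi h
  have hw2 : i' + 2 * L' ≥ n + 1 := wraps hn hl' hi' h'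
  set d := L' - L with hd
  -- the slice
  set S := oneSlice w q m with hS
  have hSlen : S.length = m - q + 1 := by
    simp [hS, oneSlice, hn]
    omega
  -- getting entries of S
  have hSget : ∀ t, t < m - q + 1 → S[t]? = w[q - 1 + t]? := by
    intro t ht
    simp only [hS, oneSlice]
    rw [List.getElem?_take_of_lt ht, List.getElem?_drop]
  -- w vs w++w
  have hww : ∀ x, x < n → (w ++ w)[x]? = w[x]? := by
    intro x hx
    exact List.getElem?_append_left (by omega)
  -- d is a period of S
  have hper : IsPeriod S d := by
    refine ⟨by omega, ?_⟩
    intro t ht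
    rw [hSlen] at ht
    rw [hSget t (by omega), hSget (t + d) (by omega)]
    set j := q - 1 + t with hj
    have hj1 : j ≤ m - 1 - d := by omega
    -- square u' at i' : position j
    have e1 : (w ++ w)[i' + (j - i')]? = (w ++ w)[i' + L' + (j - i')]? :=
      sq_get h'.1 (by omega)
    -- square u at i : position j + d
    have e2 : (w ++ w)[i + (j + d - i)]? = (w ++ w)[i + L + (j + d - i)]? :=
      sq_get h.1 (by omega)
    have r1 : i' + (j - i') = j := by omega
    have r2 : i' + L' + (j - i') = j + L' := by omega
    have r3 : i + (j + d - i) = j + d := by omega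
    have r4 : i + L + (j + d - i) = j + L' := by omega
    rw [r1, r2] at e1
    rw [r3, r4] at e2
    have : (w ++ w)[j]? = (w ++ w)[j + d]? := by rw [e1, e2]
    rw [hww j (by omega), hww (j + d) (by omega)] at this
    rw [show q - 1 + (t + d) = j + d by omega]
    exact this
  have hmin : minPeriod S ≤ d := Nat.sInf_le hper
  have : S.length < 2 * minPeriod S := hs
  omega

/-- If `w[n/4..n/2]` is aperiodic, then all rightmost occurrences in `ww` of distinct
squares of length at most `n` starting at one of the first `n/4` positions correspond
to squares of the same length. -/
theorem stmt10 {α : Type*} (w : List α) (n : ℕ) (hn : w.length = n)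
    (hs : Aperiodic (oneSlice w (n / 4) (n / 2))) :
    ∀ (u u' : List α) (i i' : ℕ), u ≠ [] → u' ≠ [] →
      (u ++ u).length ≤ n → (u' ++ u').length ≤ n →
      i < n / 4 → i' < n / 4 →
      rightmostStartsAt (u ++ u) (w ++ w) i →
      rightmostStartsAt (u' ++ u') (w ++ w) i' →
      u.length = u'.length := by
  intro u u' i i' hu hu' hlen hlen' hi hi' h h'
  simp only [List.length_append] at hlen hlen'
  rcases lt_trichotomy u.length u'.length with hlt | heq | hlt
  · exact absurd (key w n hn hs u u' i i' (by omega) (by omega) hi hi' h h' hlt) (by simp)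
  · exact heq
  · exact absurd (key w n hn hs u' u i' i (by omega) (by omega) hi' hi h' h hlt) (by simp)
end

section
/- Let Δ_1, …, Δ_6 be positive reals with Δ_1 + ⋯ + Δ_6 = n and n/8 < Δ_j < n/4 for all j, and suppose there is a function succ on Z/6Z with succ(i) ∈ {i+2, i+3} and succ(succ(i)) = i - 1 for all i. Then succ is not injective; in particular no such configuration with all six pairwise-distant occurrences can exist. -/
/-- The `d = 6` case: no successor function on `Z/6Z` arising from six overlapping
occurrences can be injective. -/
theorem stmt16 (n : ℝ) (Δ : Fin 6 → ℝ) (hpos : ∀ j, 0 < Δ j)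
    (hsum : ∑ j, Δ j = n) (hlo : ∀ j, n / 8 < Δ j) (hhi : ∀ j, Δ j < n / 4)
    (succ : ZMod 6 → ZMod 6)
    (hsucc : ∀ i, succ i = i + 2 ∨ succ i = i + 3)
    (hcyc : ∀ i, succ (succ i) = i - 1) :
    ¬ Function.Injective succ := by
  intro _
  rcases hsucc 0 with h0 | h0
  · -- succ 0 = 2
    have h0' : succ 0 = 2 := by rw [h0]; decide
    have h2 : succ 2 = 5 := by have h := hcyc 0; rw [h0'] at h; rw [h]; decide
    have h5 : succ 5 = 1 := by have h := hcyc 2; rw [h2] at h; rw [h]; decide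
    have h1 : succ 1 = 4 := by have h := hcyc 5; rw [h5] at h; rw [h]; decide
    have h4 : succ 4 = 0 := by have h := hcyc 1; rw [h1] at h; rw [h]; decide
    have h0'' : succ 0 = 3 := by have h := hcyc 4; rw [h4] at h; rw [h]; decide
    rw [h0'] at h0''; exact absurd h0'' (by decide)
  · -- succ 0 = 3
    have h0' : succ 0 = 3 := by rw [h0]; decide
    have h3 : succ 3 = 5 := by have h := hcyc 0; rw [h0'] at h; rw [h]; decide
    have h5 : succ 5 = 2 := by have h := hcyc 3; rw [h3] at h; rw [h]; decide
    have h2 : succ 2 = 4 := by have h := hcyc 5; rw [h5] at h; rw [h]; decide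
    have h4 : succ 4 = 1 := by have h := hcyc 2; rw [h2] at h; rw [h]; decide
    have h1 : succ 1 = 3 := by have h := hcyc 4; rw [h4] at h; rw [h]; decide
    have h3' : succ 3 = 0 := by have h := hcyc 1; rw [h1] at h; rw [h]; decide
    rw [h3] at h3'; exact absurd h3' (by decide)
end

section
/- Let succ be a function on Z/7Z satisfying succ(i) ∈ {i+2, i+3} and succ(succ(i)) = i - 1 for every i. Then succ(i) = i + 3 for every i. -/
/-- The `d = 7` case: such a successor function on `Z/7Z` must be `i ↦ i + 3`. -/
theorem stmt17 (succ : ZMod 7 → ZMod 7)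
    (hsucc : ∀ i, succ i = i + 2 ∨ succ i = i + 3)
    (hcyc : ∀ i, succ (succ i) = i - 1) :
    ∀ i, succ i = i + 3 := by
  intro i
  rcases hsucc i with h | h
  · exfalso
    have h2 := hcyc i
    rw [h] at h2
    rcases hsucc (i + 2) with h3 | h3 <;> rw [h3] at h2 <;>
      · have h4 := congrArg (· - i) h2
        ring_nf at h4
        revert h4
        decide
  · exact h
end
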